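/- arXiv:2302.14160 — 8 statements merged into one kernel-verified Lean document; each statement's English description precedes it below -/
import Mathlib

section
/- For the two-voice canonic scheme S = {(0,0), (t,p)B} with t > 0 and the second voice marked as bass, the number of valid n-note canons is V_n(S) = 7^n if n ≤ t, and V_n(S) = 7^t · 4^(n-t) if n > t. -/
open Filter

/-- A voice of a canonic scheme: time displacement `t`, pitch displacement `p`
(mod 7), and whether it is the marked bass voice. -/
structure Voice where
  t : ℤ
  p : ZMod 7
  bass : Bool

/-- A melody `x` (0-indexed: `x k` is the (k+1)-st note) of length `n` is a valid
canon for the scheme `S`: for any two voices sounding simultaneously, the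
difference is not a second or seventh `{1,6}`, and not a fourth `3` above a
marked bass. -/
def ValidOn (S : List Voice) (n : ℕ) (x : ℕ → ZMod 7) : Prop :=
  ∀ vi ∈ S, ∀ vj ∈ S, ∀ a b : ℕ, a < n → b < n →
    (a : ℤ) + vi.t = (b : ℤ) + vj.t →
    ((x a + vi.p) - (x b + vj.p) ∉ ({1, 6} : Set (ZMod 7)) ∧
     (vj.bass = true → (x a + vi.p) - (x b + vj.p) ≠ 3))

/-- `V S n` is the number of valid `n`-note canons for the scheme `S`
(melodies normalized to be `0` beyond position `n`). -/
noncomputable def V (S : List Voice) (n : ℕ) : ℕ :=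
  Nat.card {x : ℕ → ZMod 7 // ValidOn S n x ∧ ∀ k, n ≤ k → x k = 0}

/-! ### Auxiliary development -/

/-- Allowed differences above the bass. -/
abbrev Allowed7 := {d : ZMod 7 // d ≠ 1 ∧ d ≠ 3 ∧ d ≠ 6}

lemma card_allowed7 : Nat.card Allowed7 = 4 := by
  rw [Nat.card_eq_fintype_card]; decide

/-- Extend a finite tuple by zero. -/
def ext0 {α : Type*} [Zero α] (m : ℕ) (f : Fin m → α) : ℕ → α :=
  fun k => if h : k < m then f ⟨k, h⟩ else 0

lemma ext0_lt {α : Type*} [Zero α] {m : ℕ} (f : Fin m → α) {k : ℕ} (h : k < m) :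
    ext0 m f k = f ⟨k, h⟩ := dif_pos h

/-- Build the melody from free initial values `f` and differences `g`. -/
def build (t n : ℕ) (p : ZMod 7) (f g : ℕ → ZMod 7) : ℕ → ZMod 7
  | k =>
    if _h1 : n ≤ k then 0
    else if _h2 : k < t then f k
    else if _h3 : t = 0 then 0
    else build t n p f g (k - t) + p + g (k - t)
  termination_by k => k
  decreasing_by omega

lemma build_of_ge {t n : ℕ} {p : ZMod 7} {f g : ℕ → ZMod 7} {k : ℕ} (h : n ≤ k) :
    build t n p f g k = 0 := by
  rw [build]; simp [h]

lemma build_of_lt {t n : ℕ} {p : ZMod 7} {f g : ℕ → ZMod 7} {k : ℕ}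
    (h1 : k < n) (h2 : k < t) : build t n p f g k = f k := by
  rw [build]; simp [Nat.not_le.mpr h1, h2]

lemma build_step {t n : ℕ} {p : ZMod 7} {f g : ℕ → ZMod 7} {k : ℕ}
    (h1 : k < n) (h2 : t ≤ k) (h3 : t ≠ 0) :
    build t n p f g k = build t n p f g (k - t) + p + g (k - t) := by
  rw [build]; simp [Nat.not_le.mpr h1, Nat.not_lt.mpr h2, h3]

/-- The two-voice scheme. -/
def S2 (t : ℕ) (p : ZMod 7) : List Voice := [⟨0, 0, false⟩, ⟨(t : ℤ), p, true⟩]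

lemma valid_diff {t n : ℕ} {p : ZMod 7} {x : ℕ → ZMod 7}
    (hx : ValidOn (S2 t p) n x) {b : ℕ} (hb : b + t < n) :
    x (b + t) - x b - p ≠ 1 ∧ x (b + t) - x b - p ≠ 3 ∧ x (b + t) - x b - p ≠ 6 := by
  have h1 := hx ⟨0, 0, false⟩ (by simp [S2]) ⟨(t : ℤ), p, true⟩ (by simp [S2])
    (b + t) b hb (by omega) (by push_cast; ring)
  simp only [Set.mem_insert_iff, Set.mem_singleton_iff, not_or] at h1
  have e : x (b + t) + 0 - (x b + p) = x (b + t) - x b - p := by ring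
  rw [e] at h1
  exact ⟨h1.1.1, h1.2 trivial, h1.1.2⟩

lemma validOn_of {t n : ℕ} (_ht : 0 < t) {p : ZMod 7} {x : ℕ → ZMod 7}
    (h : ∀ b, b + t < n →
      x (b + t) - x b - p ≠ 1 ∧ x (b + t) - x b - p ≠ 3 ∧ x (b + t) - x b - p ≠ 6) :
    ValidOn (S2 t p) n x := by
  intro vi hvi vj hvj a b ha hb hab
  simp only [S2, List.mem_cons, List.mem_singleton, List.not_mem_nil, or_false] at hvi hvj
  rcases hvi with rfl | rfl <;> rcases hvj with rfl | rfl <;> simp only at hab ⊢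
  · -- v0 v0
    have : a = b := by omega
    subst this
    have e : x a + 0 - (x a + 0) = (0 : ZMod 7) := by ring
    rw [e]
    refine ⟨?_, by simp⟩
    simp only [Set.mem_insert_iff, Set.mem_singleton_iff, not_or]
    exact ⟨by decide, by decide⟩
  · -- v0 v1 : a = b + t
    have hab' : a = b + t := by omega
    subst hab'
    obtain ⟨h1, h3, h6⟩ := h b (by omega)
    have e : x (b + t) + 0 - (x b + p) = x (b + t) - x b - p := by ring
    rw [e]
    refine ⟨?_, fun _ => h3⟩
    simp only [Set.mem_insert_iff, Set.mem_singleton_iff, not_or]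
    exact ⟨h1, h6⟩
  · -- v1 v0 : a + t = b
    have hab' : b = a + t := by omega
    subst hab'
    obtain ⟨h1, h3, h6⟩ := h a (by omega)
    have e : x a + p - (x (a + t) + 0) = -(x (a + t) - x a - p) := by ring
    rw [e]
    refine ⟨?_, fun hc => by simp at hc⟩
    simp only [Set.mem_insert_iff, Set.mem_singleton_iff, not_or]
    constructor
    · intro hc
      apply h6
      have h' : x (a + t) - x a - p = -(-(x (a + t) - x a - p)) := by ring
      rw [h', hc]; decide
    · intro hc
      apply h1
      have h' : x (a + t) - x a - p = -(-(x (a + t) - x a - p)) := by ring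
      rw [h', hc]; decide
  · -- v1 v1
    have : a = b := by omega
    subst this
    have e : x a + p - (x a + p) = (0 : ZMod 7) := by ring
    rw [e]
    refine ⟨?_, fun _ => by decide⟩
    simp only [Set.mem_insert_iff, Set.mem_singleton_iff, not_or]
    exact ⟨by decide, by decide⟩

lemma count_two_voice (t : ℕ) (ht : 0 < t) (p : ZMod 7) (n : ℕ) :
    V (S2 t p) n = 7 ^ (min n t) * 4 ^ (n - t) := by
  classical
  have e : {x : ℕ → ZMod 7 // ValidOn (S2 t p) n x ∧ ∀ k, n ≤ k → x k = 0} ≃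
      ((Fin (min n t) → ZMod 7) × (Fin (n - t) → Allowed7)) := by
    refine
      { toFun := fun x => (fun i => x.1 i, fun j =>
          ⟨x.1 (j + t) - x.1 j - p, valid_diff x.2.1 (by omega)⟩)
        invFun := fun fg =>
          ⟨build t n p (ext0 _ fg.1) (ext0 _ (fun j => (fg.2 j : ZMod 7))), ?_, ?_⟩
        left_inv := ?_
        right_inv := ?_ }
    · -- validity of build
      apply validOn_of ht
      intro b hb
      have hbn : b < n - t := by omega
      have hs := build_step (t := t) (n := n) (p := p)
        (f := ext0 _ fg.1) (g := ext0 _ (fun j => (fg.2 j : ZMod 7)))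
        (k := b + t) hb (by omega) (by omega)
      have hbt : b + t - t = b := by omega
      rw [hbt] at hs
      have heq : build t n p (ext0 _ fg.1) (ext0 _ (fun j => (fg.2 j : ZMod 7))) (b + t) -
          build t n p (ext0 _ fg.1) (ext0 _ (fun j => (fg.2 j : ZMod 7))) b - p
          = ext0 (n - t) (fun j => (fg.2 j : ZMod 7)) b := by
        rw [hs]; ring
      rw [heq, ext0_lt _ hbn]
      exact (fg.2 ⟨b, hbn⟩).2
    · -- zero beyond n
      intro k hk
      exact build_of_ge hk
    · -- left inverse
      rintro ⟨x, hx, hz⟩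
      ext k
      simp only
      induction k using Nat.strong_induction_on with
      | _ k ih =>
        by_cases hkn : n ≤ k
        · rw [build_of_ge hkn, hz k hkn]
        · push_neg at hkn
          by_cases hkt : k < t
          · rw [build_of_lt hkn hkt, ext0_lt _ (show k < min n t by omega)]
          · push_neg at hkt
            rw [build_step hkn hkt (by omega), ih (k - t) (by omega)]
            rw [ext0_lt _ (show k - t < n - t by omega)]
            simp only
            have hke : k - t + t = k := by omega
            rw [hke]
            ring
    · -- right inverse
      rintro ⟨f, g⟩
      refine Prod.ext ?_ ?_
      · funext i
        simp only
        rw [build_of_lt (lt_of_lt_of_le i.2 (min_le_left _ _))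
          (lt_of_lt_of_le i.2 (min_le_right _ _)), ext0_lt _ i.2]
      · funext j
        apply Subtype.ext
        simp only
        have hj : (j : ℕ) + t < n := by omega
        have hs := build_step (t := t) (n := n) (p := p)
          (f := ext0 _ f) (g := ext0 _ (fun j => (g j : ZMod 7)))
          (k := (j : ℕ) + t) hj (by omega) (by omega)
        have hbt : (j : ℕ) + t - t = (j : ℕ) := by omega
        rw [hbt] at hs
        rw [hs, ext0_lt _ j.2]
        simp only [Fin.eta]
        ring
  rw [V, Nat.card_congr e, Nat.card_prod]
  have h1 : Nat.card (Fin (min n t) → ZMod 7) = 7 ^ (min n t) := by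
    simp [Nat.card_eq_fintype_card]
  have h2 : Nat.card (Fin (n - t) → Allowed7) = 4 ^ (n - t) := by
    rw [Nat.card_eq_fintype_card, Fintype.card_fun, Fintype.card_fin,
      show Fintype.card Allowed7 = 4 from by decide]
  rw [h1, h2]

/-- two-voice scheme {(0,0),(t,p)B}, t > 0. -/
theorem two_voice_bass_count (t : ℕ) (ht : 0 < t) (p : ZMod 7) (n : ℕ) :
    (n ≤ t → V [⟨0, 0, false⟩, ⟨(t : ℤ), p, true⟩] n = 7 ^ n) ∧
    (t < n → V [⟨0, 0, false⟩, ⟨(t : ℤ), p, true⟩] n = 7 ^ t * 4 ^ (n - t)) := by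
  have h := count_two_voice t ht p n
  rw [S2] at h
  constructor
  · intro hn
    rw [h, min_eq_left hn, Nat.sub_eq_zero_of_le hn, pow_zero, mul_one]
  · intro hn
    rw [h, min_eq_right (le_of_lt hn)]
end

section
/- For the two-voice canonic scheme S = {(0,0), (t,p)} with t > 0 and no marked bass, the number of valid n-note canons is V_n(S) = 7^n if n ≤ t, and V_n(S) = 7^t · 5^(n-t) if n > t. -/
open Filter

namespace TwoVoiceAux

lemma mem16 (d : ZMod 7) : d ∈ ({1, 6} : Set (ZMod 7)) ↔ (d = 1 ∨ d = 6) := by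
  simp [Set.mem_insert_iff]

/-- Simplified predicate for the two-voice no-bass scheme. -/
def P (t : ℕ) (p : ZMod 7) (n : ℕ) (x : ℕ → ZMod 7) : Prop :=
  (∀ k, k + t < n → (x (k + t) - x k - p ≠ 1 ∧ x (k + t) - x k - p ≠ 6)) ∧
  (∀ k, n ≤ k → x k = 0)

lemma valid_iff (t : ℕ) (ht : 0 < t) (p : ZMod 7) (n : ℕ) (x : ℕ → ZMod 7) :
    ValidOn [⟨0, 0, false⟩, ⟨(t : ℤ), p, false⟩] n x ↔
    ∀ k, k + t < n → (x (k + t) - x k - p ≠ 1 ∧ x (k + t) - x k - p ≠ 6) := by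
  constructor
  · intro h k hk
    have hb : k < n := by omega
    have h2 := (h ⟨0, 0, false⟩ (by simp) ⟨(t : ℤ), p, false⟩ (by simp)
      (k + t) k hk hb (by push_cast; ring)).1
    rw [mem16] at h2
    push_neg at h2
    constructor
    · intro h1; exact h2.1 (by rw [← h1]; ring)
    · intro h1; exact h2.2 (by rw [← h1]; ring)
  · intro h vi hvi vj hvj a b ha hb hab
    simp only [List.mem_cons, List.mem_singleton, List.not_mem_nil, or_false] at hvi hvj
    rcases hvi with rfl | rfl <;> rcases hvj with rfl | rfl <;> dsimp only at hab ⊢ <;>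
        refine ⟨?_, by simp⟩
    · have : a = b := by omega
      subst this
      rw [mem16]
      rintro (h1 | h1) <;> [exact absurd (by rw [← h1]; ring : (0 : ZMod 7) = 1) (by decide);
        exact absurd (by rw [← h1]; ring : (0 : ZMod 7) = 6) (by decide)]
    · have hbt : a = b + t := by omega
      subst hbt
      have hk := h b (by omega)
      rw [mem16]
      rintro (h1 | h1)
      · exact hk.1 (by rw [← h1]; ring)
      · exact hk.2 (by rw [← h1]; ring)
    · have hbt : b = a + t := by omega
      subst hbt
      have hk := h a (by omega)
      rw [mem16]
      rintro (h1 | h1)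
      · refine hk.2 ?_
        have : x (a + t) - x a - p = -(x a + p - (x (a + t) + 0)) := by ring
        rw [this, h1]; decide
      · refine hk.1 ?_
        have : x (a + t) - x a - p = -(x a + p - (x (a + t) + 0)) := by ring
        rw [this, h1]; decide
    · have : a = b := by omega
      subst this
      rw [mem16]
      rintro (h1 | h1) <;> [exact absurd (by rw [← h1]; ring : (0 : ZMod 7) = 1) (by decide);
        exact absurd (by rw [← h1]; ring : (0 : ZMod 7) = 6) (by decide)]

lemma card_zero (t : ℕ) (p : ZMod 7) :
    Nat.card {x : ℕ → ZMod 7 // P t p 0 x} = 1 := by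
  haveI : Unique {x : ℕ → ZMod 7 // P t p 0 x} :=
    { default := ⟨fun _ => 0, ⟨fun k hk => by omega, fun k _ => rfl⟩⟩
      uniq := fun y => Subtype.ext (funext fun k => y.2.2 k k.zero_le) }
  exact Nat.card_unique

lemma step_lt (t : ℕ) (ht : 0 < t) (p : ZMod 7) (n : ℕ) (hn : n < t) :
    Nat.card {x : ℕ → ZMod 7 // P t p (n + 1) x} =
      Nat.card {x : ℕ → ZMod 7 // P t p n x} * 7 := by
  have e : {x : ℕ → ZMod 7 // P t p (n + 1) x} ≃
      {x : ℕ → ZMod 7 // P t p n x} × ZMod 7 :=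
    { toFun := fun x =>
        (⟨Function.update x.1 n 0, ⟨fun k hk => by omega, fun k hk => by
          rcases eq_or_ne k n with rfl | hne
          · rw [Function.update_self]
          · rw [Function.update_of_ne hne]; exact x.2.2 k (by omega)⟩⟩, x.1 n)
      invFun := fun yc =>
        ⟨Function.update yc.1.1 n yc.2, ⟨fun k hk => by omega, fun k hk => by
          rw [Function.update_of_ne (by omega : k ≠ n)]; exact yc.1.2.2 k (by omega)⟩⟩
      left_inv := fun x => Subtype.ext (by
        simp only [Function.update_idem, Function.update_eq_self])
      right_inv := fun yc => by
        refine Prod.ext (Subtype.ext ?_) ?_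
        · simp only [Function.update_idem]
          have h0 : yc.1.1 n = 0 := yc.1.2.2 n le_rfl
          rw [← h0, Function.update_eq_self]
        · simp only [Function.update_self] }
  rw [Nat.card_congr e, Nat.card_prod, Nat.card_zmod]

lemma step_ge (t : ℕ) (ht : 0 < t) (p : ZMod 7) (n : ℕ) (hn : t ≤ n) :
    Nat.card {x : ℕ → ZMod 7 // P t p (n + 1) x} =
      Nat.card {x : ℕ → ZMod 7 // P t p n x} * 5 := by
  have hnt : n - t + t = n := by omega
  have hne : n - t ≠ n := by omega
  have e : {x : ℕ → ZMod 7 // P t p (n + 1) x} ≃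
      {x : ℕ → ZMod 7 // P t p n x} × {d : ZMod 7 // d ≠ 1 ∧ d ≠ 6} :=
    { toFun := fun x =>
        (⟨Function.update x.1 n 0, ⟨fun k hk => by
          have h1 := x.2.1 k (by omega)
          rw [Function.update_of_ne (by omega : k + t ≠ n),
            Function.update_of_ne (by omega : k ≠ n)]
          exact h1, fun k hk => by
          rcases eq_or_ne k n with rfl | hke
          · rw [Function.update_self]
          · rw [Function.update_of_ne hke]; exact x.2.2 k (by omega)⟩⟩,
         ⟨x.1 n - x.1 (n - t) - p, by
          have h1 := x.2.1 (n - t) (by omega)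
          rw [hnt] at h1
          exact h1⟩)
      invFun := fun yd =>
        ⟨Function.update yd.1.1 n (yd.1.1 (n - t) + p + yd.2.1), ⟨fun k hk => by
          rcases eq_or_ne (k + t) n with hkn | hkn
          · have hknt : k = n - t := by omega
            rw [hkn, Function.update_self, Function.update_of_ne (by omega : k ≠ n), hknt]
            constructor
            · intro h1; exact yd.2.2.1 (by linear_combination h1)
            · intro h1; exact yd.2.2.2 (by linear_combination h1)
          · rw [Function.update_of_ne hkn, Function.update_of_ne (by omega : k ≠ n)]
            exact yd.1.2.1 k (by omega), fun k hk => by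
          rw [Function.update_of_ne (by omega : k ≠ n)]
          exact yd.1.2.2 k (by omega)⟩⟩
      left_inv := fun x => Subtype.ext (by
        dsimp only
        rw [Function.update_idem, Function.update_of_ne hne,
          (by ring : x.1 (n - t) + p + (x.1 n - x.1 (n - t) - p) = x.1 n),
          Function.update_eq_self])
      right_inv := fun yd => by
        refine Prod.ext (Subtype.ext ?_) (Subtype.ext ?_)
        · dsimp only
          rw [Function.update_idem]
          have h0 : yd.1.1 n = 0 := yd.1.2.2 n le_rfl
          rw [← h0, Function.update_eq_self]
        · dsimp only
          rw [Function.update_self, Function.update_of_ne hne]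
          ring }
  rw [Nat.card_congr e, Nat.card_prod]
  have h5 : Nat.card {d : ZMod 7 // d ≠ 1 ∧ d ≠ 6} = 5 := by
    rw [Nat.card_eq_fintype_card]; decide
  rw [h5]

lemma card_P (t : ℕ) (ht : 0 < t) (p : ZMod 7) :
    ∀ n, Nat.card {x : ℕ → ZMod 7 // P t p n x} = 7 ^ (min n t) * 5 ^ (n - t) := by
  intro n
  induction n with
  | zero => simp [card_zero]
  | succ n ih =>
    rcases lt_or_ge n t with hn | hn
    · rw [step_lt t ht p n hn, ih]
      have h1 : min n t = n := by omega
      have h2 : min (n + 1) t = n + 1 := by omega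
      have h3 : n - t = 0 := by omega
      have h4 : n + 1 - t = 0 := by omega
      rw [h1, h2, h3, h4, pow_succ]
      ring
    · rw [step_ge t ht p n hn, ih]
      have h1 : min n t = t := by omega
      have h2 : min (n + 1) t = t := by omega
      have h3 : n + 1 - t = (n - t) + 1 := by omega
      rw [h1, h2, h3, pow_succ]
      ring

end TwoVoiceAux

/-- two-voice scheme {(0,0),(t,p)}, t > 0, no bass. -/
theorem two_voice_nobass_count (t : ℕ) (ht : 0 < t) (p : ZMod 7) (n : ℕ) :
    (n ≤ t → V [⟨0, 0, false⟩, ⟨(t : ℤ), p, false⟩] n = 7 ^ n) ∧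
    (t < n → V [⟨0, 0, false⟩, ⟨(t : ℤ), p, false⟩] n = 7 ^ t * 5 ^ (n - t)) := by
  have key : V [⟨0, 0, false⟩, ⟨(t : ℤ), p, false⟩] n =
      Nat.card {x : ℕ → ZMod 7 // TwoVoiceAux.P t p n x} := by
    apply Nat.card_congr
    exact Equiv.subtypeEquivRight fun x =>
      and_congr_left' (TwoVoiceAux.valid_iff t ht p n x)
  rw [key, TwoVoiceAux.card_P t ht p n]
  constructor
  · intro h
    have h1 : min n t = n := by omega
    have h2 : n - t = 0 := by omega
    rw [h1, h2, pow_zero, mul_one]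
  · intro h
    have h1 : min n t = t := by omega
    rw [h1]
end

section
/- For the scheme S_Fib = {(0,0), (1,-8)B, (3,0)} (equivalently, with pitches taken mod 7, {(0,0), (1,6)B, (3,0)}), a melody (x_1,...,x_n) with n ≥ 2 is a valid canon if and only if every consecutive difference d_i = x_{i+1} - x_i lies in {1, 3, 4, 6} ⊂ ℤ/7ℤ (i.e., ±1 or ±3 steps), and consecutive differences obey: 3 may be followed by 1 or 3; 1 must be followed by 3; 4 may be followed by 4 or 6; 6 must be followed by 4; and no difference in {1,3} is ever adjacent to one in {4,6}. -/
open Filter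

/-- The Fibonacci scheme {(0,0),(1,6)B,(3,0)}. -/
def SFib : List Voice := [⟨0, 0, false⟩, ⟨1, 6, true⟩, ⟨3, 0, false⟩]

lemma valid_iff_diffs (n : ℕ) (x : ℕ → ZMod 7) :
    ValidOn SFib n x ↔
      ((∀ a, a + 1 < n → x (a + 1) - x a ∉ ({0, 2, 5} : Set (ZMod 7))) ∧
       (∀ a, a + 2 < n → x (a + 2) - x a ∉ ({0, 2, 5} : Set (ZMod 7))) ∧
       (∀ a, a + 3 < n → x (a + 3) - x a ∉ ({1, 6} : Set (ZMod 7)))) := by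
  constructor
  · intro h
    refine ⟨?_, ?_, ?_⟩
    · intro a ha
      obtain ⟨h1, h2⟩ := h ⟨0, 0, false⟩ (by simp [SFib]) ⟨1, 6, true⟩ (by simp [SFib])
        (a + 1) a ha (by omega) (by push_cast; ring)
      have h2 := h2 rfl
      have he : x (a + 1) - x a = ((x (a + 1) + (0 : ZMod 7)) - (x a + 6)) + 6 := by ring
      rw [he]
      revert h1 h2
      generalize (x (a + 1) + (0 : ZMod 7)) - (x a + 6) = e
      simp only [Set.mem_insert_iff, Set.mem_singleton_iff]
      revert e; decide
    · intro a ha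
      obtain ⟨h1, h2⟩ := h ⟨3, 0, false⟩ (by simp [SFib]) ⟨1, 6, true⟩ (by simp [SFib])
        a (a + 2) (by omega) ha (by push_cast; ring)
      have h2 := h2 rfl
      have he : x (a + 2) - x a = -(((x a + (0 : ZMod 7)) - (x (a + 2) + 6)) + 6) := by ring
      rw [he]
      revert h1 h2
      generalize (x a + (0 : ZMod 7)) - (x (a + 2) + 6) = e
      simp only [Set.mem_insert_iff, Set.mem_singleton_iff]
      revert e; decide
    · intro a ha
      obtain ⟨h1, _⟩ := h ⟨0, 0, false⟩ (by simp [SFib]) ⟨3, 0, false⟩ (by simp [SFib])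
        (a + 3) a ha (by omega) (by push_cast; ring)
      have he : x (a + 3) - x a = ((x (a + 3) + (0 : ZMod 7)) - (x a + 0)) := by ring
      rw [he]
      revert h1
      generalize (x (a + 3) + (0 : ZMod 7)) - (x a + 0) = e
      simp only [Set.mem_insert_iff, Set.mem_singleton_iff]
      revert e; decide
  · rintro ⟨h1, h2, h3⟩ vi hvi vj hvj a b ha hb hab
    simp only [SFib, List.mem_cons, List.not_mem_nil, or_false] at hvi hvj
    rcases hvi with rfl | rfl | rfl <;> rcases hvj with rfl | rfl | rfl <;>
      simp only [] at hab ⊢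
    · -- (0,0): a = b
      have hba : b = a := by omega
      subst hba
      constructor
      · simp only [Set.mem_insert_iff, Set.mem_singleton_iff]
        have : x b + (0 : ZMod 7) - (x b + 0) = 0 := by ring
        rw [this]; decide
      · intro hc; exact absurd hc (by decide)
    · -- (0,1): a = b + 1
      have hba : a = b + 1 := by omega
      subst hba
      have h := h1 b (by omega)
      have he : (x (b + 1) + (0 : ZMod 7)) - (x b + 6) = (x (b + 1) - x b) - 6 := by ring
      rw [he]
      revert h
      generalize x (b + 1) - x b = e
      simp only [Set.mem_insert_iff, Set.mem_singleton_iff]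
      revert e; decide
    · -- (0,3): a = b + 3
      have hba : a = b + 3 := by omega
      subst hba
      have h := h3 b (by omega)
      have he : (x (b + 3) + (0 : ZMod 7)) - (x b + 0) = x (b + 3) - x b := by ring
      rw [he]
      revert h
      generalize x (b + 3) - x b = e
      simp only [Set.mem_insert_iff, Set.mem_singleton_iff]
      revert e; decide
    · -- (1,0): b = a + 1
      have hba : b = a + 1 := by omega
      subst hba
      have h := h1 a (by omega)
      have he : (x a + (6 : ZMod 7)) - (x (a + 1) + 0) = -(x (a + 1) - x a) + 6 := by ring
      rw [he]
      revert h
      generalize x (a + 1) - x a = e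
      simp only [Set.mem_insert_iff, Set.mem_singleton_iff]
      revert e; decide
    · -- (1,1): a = b
      have hba : b = a := by omega
      subst hba
      constructor
      · simp only [Set.mem_insert_iff, Set.mem_singleton_iff]
        have : x b + (6 : ZMod 7) - (x b + 6) = 0 := by ring
        rw [this]; decide
      · intro _
        have : x b + (6 : ZMod 7) - (x b + 6) = 0 := by ring
        rw [this]; decide
    · -- (1,3): a = b + 2
      have hba : a = b + 2 := by omega
      subst hba
      have h := h2 b (by omega)
      have he : (x (b + 2) + (6 : ZMod 7)) - (x b + 0) = (x (b + 2) - x b) + 6 := by ring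
      rw [he]
      revert h
      generalize x (b + 2) - x b = e
      simp only [Set.mem_insert_iff, Set.mem_singleton_iff]
      revert e; decide
    · -- (3,0): b = a + 3
      have hba : b = a + 3 := by omega
      subst hba
      have h := h3 a (by omega)
      have he : (x a + (0 : ZMod 7)) - (x (a + 3) + 0) = -(x (a + 3) - x a) := by ring
      rw [he]
      revert h
      generalize x (a + 3) - x a = e
      simp only [Set.mem_insert_iff, Set.mem_singleton_iff]
      revert e; decide
    · -- (3,1): b = a + 2
      have hba : b = a + 2 := by omega
      subst hba
      have h := h2 a (by omega)
      have he : (x a + (0 : ZMod 7)) - (x (a + 2) + 6) = -(x (a + 2) - x a) - 6 := by ring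
      rw [he]
      revert h
      generalize x (a + 2) - x a = e
      simp only [Set.mem_insert_iff, Set.mem_singleton_iff]
      revert e; decide
    · -- (3,3): a = b
      have hba : b = a := by omega
      subst hba
      constructor
      · simp only [Set.mem_insert_iff, Set.mem_singleton_iff]
        have : x b + (0 : ZMod 7) - (x b + 0) = 0 := by ring
        rw [this]; decide
      · intro hc; exact absurd hc (by decide)

set_option maxHeartbeats 1000000 in
set_option synthInstance.maxHeartbeats 400000 in
/-- characterization of valid canons for the Fibonacci scheme. -/
theorem fib_scheme_characterization (n : ℕ) (hn : 2 ≤ n) (x : ℕ → ZMod 7) :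
    ValidOn SFib n x ↔
      ((∀ i, i + 1 < n → x (i + 1) - x i ∈ ({1, 3, 4, 6} : Set (ZMod 7))) ∧
       (∀ i, i + 2 < n →
         (x (i + 1) - x i, x (i + 2) - x (i + 1)) ∈
           ({(3, 3), (3, 1), (1, 3), (4, 4), (4, 6), (6, 4)} :
             Set (ZMod 7 × ZMod 7)))) := by
  rw [valid_iff_diffs]
  constructor
  · rintro ⟨h1, h2, _⟩
    constructor
    · intro i hi
      have h := h1 i hi
      revert h
      generalize x (i + 1) - x i = e
      simp only [Set.mem_insert_iff, Set.mem_singleton_iff]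
      revert e; decide
    · intro i hi
      have ha := h1 i (by omega)
      have hb := h1 (i + 1) (by omega)
      have hc := h2 i hi
      have he : x (i + 2) - x i = (x (i + 2) - x (i + 1)) + (x (i + 1) - x i) := by ring
      rw [he] at hc
      have hiw : i + 1 + 1 = i + 2 := by omega
      rw [hiw] at hb
      revert ha hb hc
      generalize x (i + 1) - x i = e1
      generalize x (i + 2) - x (i + 1) = e2
      simp only [Set.mem_insert_iff, Set.mem_singleton_iff, Prod.mk.injEq]
      revert e1 e2; decide
  · rintro ⟨g1, g2⟩
    refine ⟨?_, ?_, ?_⟩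
    · intro a ha
      have h := g1 a ha
      revert h
      generalize x (a + 1) - x a = e
      simp only [Set.mem_insert_iff, Set.mem_singleton_iff]
      revert e; decide
    · intro a ha
      have h := g2 a ha
      have he : x (a + 2) - x a = (x (a + 2) - x (a + 1)) + (x (a + 1) - x a) := by ring
      rw [he]
      revert h
      generalize x (a + 1) - x a = e1
      generalize x (a + 2) - x (a + 1) = e2
      simp only [Set.mem_insert_iff, Set.mem_singleton_iff, Prod.mk.injEq]
      revert e1 e2; decide
    · intro a ha
      have h := g2 a (by omega)
      have h' := g2 (a + 1) (by omega)
      have hw1 : a + 1 + 1 = a + 2 := by omega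
      have hw2 : a + 1 + 2 = a + 3 := by omega
      rw [hw1, hw2] at h'
      have he : x (a + 3) - x a =
          (x (a + 3) - x (a + 2)) + (x (a + 2) - x (a + 1)) + (x (a + 1) - x a) := by ring
      rw [he]
      revert h h'
      generalize x (a + 1) - x a = e1
      generalize x (a + 2) - x (a + 1) = e2
      generalize x (a + 3) - x (a + 2) = e3
      simp only [Set.mem_insert_iff, Set.mem_singleton_iff, Prod.mk.injEq]
      intro h h'
      rcases h with ⟨rfl, rfl⟩ | ⟨rfl, rfl⟩ | ⟨rfl, rfl⟩ | ⟨rfl, rfl⟩ | ⟨rfl, rfl⟩ | ⟨rfl, rfl⟩ <;>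
        revert h' <;> revert e3 <;> decide
end

section
/- For the scheme S_Fib = {(0,0), (1,6)B, (3,0)}, the counts of valid canons satisfy V_1 = 7, V_2 = 28, V_3 = 42, and the Fibonacci recurrence V_n = V_{n-1} + V_{n-2} for all n ≥ 4. -/
open Filter

/- ### auxiliary development -/

def stepOK (d : ZMod 7) : Prop := d = 1 ∨ d = 3 ∨ d = 4 ∨ d = 6

instance stepOK.dec (d : ZMod 7) : Decidable (stepOK d) := by
  unfold stepOK; infer_instance

def Tail0 (n : ℕ) (x : ℕ → ZMod 7) : Prop := ∀ k, n ≤ k → x k = 0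

def Good (n : ℕ) (x : ℕ → ZMod 7) : Prop :=
  (∀ k, k + 2 ≤ n → stepOK (x (k+1) - x k)) ∧
  (∀ k, k + 3 ≤ n → stepOK (x (k+2) - x k))

lemma notmem (u : ZMod 7) (h1 : u ≠ 1) (h6 : u ≠ 6) : u ∉ ({1, 6} : Set (ZMod 7)) := by
  rintro (rfl | rfl)
  · exact h1 rfl
  · exact h6 rfl

-- decide lemmas for the forward direction
lemma fwd1 : ∀ u v : ZMod 7, (u + 0) - (v + 6) ≠ 1 → (u + 0) - (v + 6) ≠ 6 →
    (u + 0) - (v + 6) ≠ 3 → stepOK (u - v) := by decide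

lemma fwd2 : ∀ u v : ZMod 7, (u + 0) - (v + 6) ≠ 1 → (u + 0) - (v + 6) ≠ 6 →
    (u + 0) - (v + 6) ≠ 3 → stepOK (v - u) := by decide

-- decide lemmas for the backward direction
lemma bwd0 : ∀ u : ZMod 7, u - u ≠ 1 ∧ u - u ≠ 6 ∧ u - u ≠ 3 := by decide

lemma bwd1 : ∀ d : ZMod 7, stepOK d →
    (d + (0 - 6) ≠ 1 ∧ d + (0 - 6) ≠ 6 ∧ d + (0 - 6) ≠ 3) ∧
    (-d + (6 - 0) ≠ 1 ∧ -d + (6 - 0) ≠ 6) := by decide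

lemma bwd2 : ∀ f : ZMod 7, stepOK f →
    (f + (6 - 0) ≠ 1 ∧ f + (6 - 0) ≠ 6) ∧
    (-f + (0 - 6) ≠ 1 ∧ -f + (0 - 6) ≠ 6 ∧ -f + (0 - 6) ≠ 3) := by decide

set_option synthInstance.maxHeartbeats 1000000 in
set_option maxHeartbeats 1000000 in
lemma bwd3 : ∀ d1 d2 d3 : ZMod 7, stepOK d1 ∧ stepOK d2 ∧ stepOK d3 ∧
    stepOK (d1 + d2) ∧ stepOK (d2 + d3) →
    (d1 + d2 + d3 ≠ 1 ∧ d1 + d2 + d3 ≠ 6 ∧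
     -(d1 + d2 + d3) ≠ 1 ∧ -(d1 + d2 + d3) ≠ 6 ∧ -(d1 + d2 + d3) ≠ 3) := by decide

lemma valid_iff (n : ℕ) (x : ℕ → ZMod 7) : ValidOn SFib n x ↔ Good n x := by
  constructor
  · intro h
    constructor
    · intro k hk
      have h1 := h ⟨0, 0, false⟩ (by simp [SFib]) ⟨1, 6, true⟩ (by simp [SFib])
        (k+1) k (by omega) (by omega) (by push_cast; ring)
      simp only [Set.mem_insert_iff, Set.mem_singleton_iff, not_or] at h1
      exact fwd1 _ _ h1.1.1 h1.1.2 (h1.2 (by trivial))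
    · intro k hk
      have h1 := h ⟨3, 0, false⟩ (by simp [SFib]) ⟨1, 6, true⟩ (by simp [SFib])
        k (k+2) (by omega) (by omega) (by push_cast; ring)
      simp only [Set.mem_insert_iff, Set.mem_singleton_iff, not_or] at h1
      exact fwd2 _ _ h1.1.1 h1.1.2 (h1.2 (by trivial))
  · intro hg vi hvi vj hvj a b ha hb hab
    obtain ⟨h1, h2⟩ := hg
    simp only [SFib, List.mem_cons, List.not_mem_nil, or_false] at hvi hvj
    have falseb : ∀ P : Prop, (false = true → P) := fun P hh => absurd hh (by decide)
    rcases hvi with rfl | rfl | rfl <;> rcases hvj with rfl | rfl | rfl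
    · -- (v0, v0) : a = b
      have hab' : (a : ℤ) + 0 = (b : ℤ) + 0 := hab
      obtain rfl : a = b := by omega
      exact ⟨notmem _ ((bwd0 (x a + 0)).1) ((bwd0 (x a + 0)).2.1), falseb _⟩
    · -- (v0, v1) : a = b + 1
      have hab' : (a : ℤ) + 0 = (b : ℤ) + 1 := hab
      obtain rfl : a = b + 1 := by omega
      have hs := h1 b (by omega)
      have e : (x (b+1) + 0) - (x b + 6) = (x (b+1) - x b) + (0 - 6) := by ring
      rw [e]
      exact ⟨notmem _ ((bwd1 _ hs).1.1) ((bwd1 _ hs).1.2.1), fun _ => (bwd1 _ hs).1.2.2⟩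
    · -- (v0, v2) : a = b + 3
      have hab' : (a : ℤ) + 0 = (b : ℤ) + 3 := hab
      obtain rfl : a = b + 3 := by omega
      have hs1 := h1 b (by omega)
      have hs2 := h1 (b+1) (by omega)
      have hs3 := h1 (b+2) (by omega)
      have hp1 := h2 b (by omega)
      have hp2 := h2 (b+1) (by omega)
      rw [show x (b+2) - x b = (x (b+1) - x b) + (x (b+2) - x (b+1)) from by ring] at hp1
      rw [show x (b+1+2) - x (b+1) = (x (b+2) - x (b+1)) + (x (b+3) - x (b+2)) from by ring] at hp2
      have key := bwd3 _ _ _ ⟨hs1, hs2, hs3, hp1, hp2⟩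
      have e : (x (b+3) + 0) - (x b + 0) =
          (x (b+1) - x b) + (x (b+2) - x (b+1)) + (x (b+3) - x (b+2)) := by ring
      rw [e]
      exact ⟨notmem _ key.1 key.2.1, falseb _⟩
    · -- (v1, v0) : b = a + 1
      have hab' : (a : ℤ) + 1 = (b : ℤ) + 0 := hab
      obtain rfl : b = a + 1 := by omega
      have hs := h1 a (by omega)
      have e : (x a + 6) - (x (a+1) + 0) = -(x (a+1) - x a) + (6 - 0) := by ring
      rw [e]
      exact ⟨notmem _ ((bwd1 _ hs).2.1) ((bwd1 _ hs).2.2), falseb _⟩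
    · -- (v1, v1) : a = b
      have hab' : (a : ℤ) + 1 = (b : ℤ) + 1 := hab
      obtain rfl : a = b := by omega
      exact ⟨notmem _ ((bwd0 (x a + 6)).1) ((bwd0 (x a + 6)).2.1),
        fun _ => (bwd0 (x a + 6)).2.2⟩
    · -- (v1, v2) : a = b + 2
      have hab' : (a : ℤ) + 1 = (b : ℤ) + 3 := hab
      obtain rfl : a = b + 2 := by omega
      have hp := h2 b (by omega)
      have e : (x (b+2) + 6) - (x b + 0) = (x (b+2) - x b) + (6 - 0) := by ring
      rw [e]
      exact ⟨notmem _ ((bwd2 _ hp).1.1) ((bwd2 _ hp).1.2), falseb _⟩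
    · -- (v2, v0) : b = a + 3
      have hab' : (a : ℤ) + 3 = (b : ℤ) + 0 := hab
      obtain rfl : b = a + 3 := by omega
      have hs1 := h1 a (by omega)
      have hs2 := h1 (a+1) (by omega)
      have hs3 := h1 (a+2) (by omega)
      have hp1 := h2 a (by omega)
      have hp2 := h2 (a+1) (by omega)
      rw [show x (a+2) - x a = (x (a+1) - x a) + (x (a+2) - x (a+1)) from by ring] at hp1
      rw [show x (a+1+2) - x (a+1) = (x (a+2) - x (a+1)) + (x (a+3) - x (a+2)) from by ring] at hp2
      have key := bwd3 _ _ _ ⟨hs1, hs2, hs3, hp1, hp2⟩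
      have e : (x a + 0) - (x (a+3) + 0) =
          -((x (a+1) - x a) + (x (a+2) - x (a+1)) + (x (a+3) - x (a+2))) := by ring
      rw [e]
      exact ⟨notmem _ key.2.2.1 key.2.2.2.1, falseb _⟩
    · -- (v2, v1) : b = a + 2
      have hab' : (a : ℤ) + 3 = (b : ℤ) + 1 := hab
      obtain rfl : b = a + 2 := by omega
      have hp := h2 a (by omega)
      have e : (x a + 0) - (x (a+2) + 6) = -(x (a+2) - x a) + (0 - 6) := by ring
      rw [e]
      exact ⟨notmem _ ((bwd2 _ hp).2.1) ((bwd2 _ hp).2.2.1), fun _ => (bwd2 _ hp).2.2.2⟩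
    · -- (v2, v2) : a = b
      have hab' : (a : ℤ) + 3 = (b : ℤ) + 3 := hab
      obtain rfl : a = b := by omega
      exact ⟨notmem _ ((bwd0 (x a + 0)).1) ((bwd0 (x a + 0)).2.1), falseb _⟩

abbrev C (n : ℕ) : Type := {x : ℕ → ZMod 7 // Good n x ∧ Tail0 n x}

lemma cardV (n : ℕ) : V SFib n = Nat.card (C n) :=
  Nat.card_congr (Equiv.subtypeEquivRight fun x => and_congr_left' (valid_iff n x))

instance Cfin (n : ℕ) : Finite (C n) := by
  apply Finite.of_injective (fun x : C n => (fun k : Fin n => x.1 k))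
  intro x y h
  apply Subtype.ext; funext k
  by_cases hk : k < n
  · exact congrFun h ⟨k, hk⟩
  · rw [x.2.2 k (by omega), y.2.2 k (by omega)]

/- ### small cases -/

def e1 : C 1 ≃ ZMod 7 where
  toFun x := x.1 0
  invFun c := ⟨fun k => if k = 0 then c else 0,
    ⟨⟨fun k hk => absurd hk (by omega), fun k hk => absurd hk (by omega)⟩,
     fun k hk => if_neg (by omega)⟩⟩
  left_inv := by
    rintro ⟨x, hx, ht⟩
    apply Subtype.ext; funext k
    by_cases hk : k = 0
    · subst hk; simp
    · simp only [if_neg hk]; exact (ht k (by omega)).symm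
  right_inv := by intro c; simp

abbrev P2 : Type := {p : ZMod 7 × ZMod 7 // stepOK (p.2 - p.1)}

def e2 : C 2 ≃ P2 where
  toFun x := ⟨(x.1 0, x.1 1), x.2.1.1 0 (by omega)⟩
  invFun p := ⟨fun k => if k = 0 then p.1.1 else if k = 1 then p.1.2 else 0,
    ⟨⟨fun k hk => by
        obtain rfl : k = 0 := by omega
        simpa using p.2,
      fun k hk => absurd hk (by omega)⟩,
     fun k hk => by
        have h0 : k ≠ 0 := by omega
        have h1 : k ≠ 1 := by omega
        simp [h0, h1]⟩⟩
  left_inv := by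
    rintro ⟨x, hx, ht⟩
    apply Subtype.ext; funext k
    rcases Nat.lt_or_ge k 2 with hk | hk
    · interval_cases k <;> simp
    · simp only [if_neg (by omega : ¬ k = 0), if_neg (by omega : ¬ k = 1)]
      exact (ht k hk).symm
  right_inv := by
    rintro ⟨⟨a, b⟩, hp⟩
    apply Subtype.ext; simp

abbrev P3 : Type := {t : ZMod 7 × ZMod 7 × ZMod 7 //
  stepOK (t.2.1 - t.1) ∧ stepOK (t.2.2 - t.2.1) ∧ stepOK (t.2.2 - t.1)}

def e3 : C 3 ≃ P3 where
  toFun x := ⟨(x.1 0, x.1 1, x.1 2),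
    ⟨x.2.1.1 0 (by omega), x.2.1.1 1 (by omega), x.2.1.2 0 (by omega)⟩⟩
  invFun t := ⟨fun k => if k = 0 then t.1.1 else if k = 1 then t.1.2.1
      else if k = 2 then t.1.2.2 else 0,
    ⟨⟨by
        intro k hk
        have hk' : k < 2 := by omega
        interval_cases k
        · simpa using t.2.1
        · simpa using t.2.2.1,
      by
        intro k hk
        obtain rfl : k = 0 := by omega
        simpa using t.2.2.2⟩,
     fun k hk => by
        have h0 : k ≠ 0 := by omega
        have h1 : k ≠ 1 := by omega
        have h2 : k ≠ 2 := by omega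
        simp [h0, h1, h2]⟩⟩
  left_inv := by
    rintro ⟨x, hx, ht⟩
    apply Subtype.ext; funext k
    rcases Nat.lt_or_ge k 3 with hk | hk
    · interval_cases k <;> simp
    · simp only [if_neg (by omega : ¬ k = 0), if_neg (by omega : ¬ k = 1),
        if_neg (by omega : ¬ k = 2)]
      exact (ht k hk).symm
  right_inv := by
    rintro ⟨⟨a, b, c⟩, hp⟩
    apply Subtype.ext; simp

lemma cardC1 : Nat.card (C 1) = 7 := by rw [Nat.card_congr e1, Nat.card_zmod]

set_option maxHeartbeats 1000000 in
lemma cardC2 : Nat.card (C 2) = 28 := by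
  rw [Nat.card_congr e2, Nat.card_eq_fintype_card]
  decide

set_option maxHeartbeats 4000000 in
lemma cardC3 : Nat.card (C 3) = 42 := by
  rw [Nat.card_congr e3, Nat.card_eq_fintype_card]
  decide

/- ### the Fibonacci recurrence -/

def NP (m : ℕ) (x : ℕ → ZMod 7) : Prop :=
  x (m+3) - x (m+2) = 1 ∨ x (m+3) - x (m+2) = 6

def s3 (e : ZMod 7) : ZMod 7 := if e = 1 ∨ e = 3 then 3 else 4
def s1 (e : ZMod 7) : ZMod 7 := if e = 1 ∨ e = 3 then 1 else 6

lemma kW1 : ∀ e : ZMod 7, stepOK (s3 e) := by decide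
lemma kW2 : ∀ e : ZMod 7, stepOK e → stepOK (e + s3 e) := by decide
lemma kW3 : ∀ e : ZMod 7, s3 e ≠ 1 ∧ s3 e ≠ 6 := by decide
lemma kW4 : ∀ e d : ZMod 7, stepOK e ∧ stepOK d ∧ stepOK (e + d) ∧ d ≠ 1 ∧ d ≠ 6 →
    s3 e = d := by decide
lemma kN1 : ∀ e : ZMod 7, stepOK (s1 e) := by decide
lemma kN2 : ∀ e : ZMod 7, stepOK (s3 e + s1 e) := by decide
lemma kN3 : ∀ e : ZMod 7, s1 e = 1 ∨ s1 e = 6 := by decide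
set_option maxHeartbeats 1000000 in
lemma kN4 : ∀ e d0 d1 : ZMod 7, stepOK e ∧ stepOK d0 ∧ stepOK d1 ∧ stepOK (e + d0) ∧
    stepOK (d0 + d1) ∧ (d1 = 1 ∨ d1 = 6) → s3 e = d0 ∧ s1 e = d1 := by decide

def trunc (m : ℕ) (x : ℕ → ZMod 7) : ℕ → ZMod 7 := fun k => if k < m then x k else 0

lemma trunc_lt {m k : ℕ} (x : ℕ → ZMod 7) (h : k < m) : trunc m x k = x k := if_pos h
lemma trunc_ge {m k : ℕ} (x : ℕ → ZMod 7) (h : m ≤ k) : trunc m x k = 0 := if_neg (by omega)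

lemma trunc_good {n m : ℕ} (h : m ≤ n) (x : ℕ → ZMod 7) (hx : Good n x) :
    Good m (trunc m x) := by
  constructor
  · intro k hk
    rw [trunc_lt x (by omega), trunc_lt x (by omega)]
    exact hx.1 k (by omega)
  · intro k hk
    rw [trunc_lt x (by omega), trunc_lt x (by omega)]
    exact hx.2 k (by omega)

lemma trunc_tail (m : ℕ) (x : ℕ → ZMod 7) : Tail0 m (trunc m x) := fun _ hk => trunc_ge x hk

/-- extension of a length `m+3` canon by one "wide" step -/
def extW (m : ℕ) (y : ℕ → ZMod 7) : ℕ → ZMod 7 := fun k =>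
  if k < m+3 then y k else if k = m+3 then y (m+2) + s3 (y (m+2) - y (m+1)) else 0

lemma extW_lt {m k : ℕ} (y : ℕ → ZMod 7) (h : k < m+3) : extW m y k = y k := if_pos h
lemma extW_eq (m : ℕ) (y : ℕ → ZMod 7) :
    extW m y (m+3) = y (m+2) + s3 (y (m+2) - y (m+1)) := by
  unfold extW; rw [if_neg (by omega), if_pos rfl]
lemma extW_gt {m k : ℕ} (y : ℕ → ZMod 7) (h : m+4 ≤ k) : extW m y k = 0 := by
  unfold extW; rw [if_neg (by omega), if_neg (by omega)]

lemma extW_good (m : ℕ) (y : ℕ → ZMod 7) (hy : Good (m+3) y) : Good (m+4) (extW m y) := by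
  constructor
  · intro k hk
    rcases Nat.lt_or_ge k (m+2) with h | h
    · rw [extW_lt y (by omega), extW_lt y (by omega)]; exact hy.1 k (by omega)
    · obtain rfl : k = m+2 := by omega
      have e : extW m y (m+2+1) - extW m y (m+2) = s3 (y (m+2) - y (m+1)) := by
        rw [show m+2+1 = m+3 from rfl, extW_eq, extW_lt y (by omega)]; ring
      rw [e]; exact kW1 _
  · intro k hk
    rcases Nat.lt_or_ge k (m+1) with h | h
    · rw [extW_lt y (by omega), extW_lt y (by omega)]; exact hy.2 k (by omega)
    · obtain rfl : k = m+1 := by omega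
      have e : extW m y (m+1+2) - extW m y (m+1) =
          (y (m+2) - y (m+1)) + s3 (y (m+2) - y (m+1)) := by
        rw [show m+1+2 = m+3 from rfl, extW_eq, extW_lt y (by omega)]; ring
      rw [e]; exact kW2 _ (hy.1 (m+1) (by omega))

lemma extW_tail (m : ℕ) (y : ℕ → ZMod 7) : Tail0 (m+4) (extW m y) :=
  fun _ hk => extW_gt y hk

lemma extW_notNP (m : ℕ) (y : ℕ → ZMod 7) : ¬ NP m (extW m y) := by
  intro h
  have e : extW m y (m+3) - extW m y (m+2) = s3 (y (m+2) - y (m+1)) := by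
    rw [extW_eq, extW_lt y (by omega)]; ring
  unfold NP at h
  rw [e] at h
  rcases h with h | h
  · exact (kW3 _).1 h
  · exact (kW3 _).2 h

def eW (m : ℕ) : {x : C (m+4) // ¬ NP m x.1} ≃ C (m+3) where
  toFun x := ⟨trunc (m+3) x.1.1, trunc_good (by omega) _ x.1.2.1, trunc_tail _ _⟩
  invFun y := ⟨⟨extW m y.1, extW_good m y.1 y.2.1, extW_tail m y.1⟩, extW_notNP m y.1⟩
  left_inv := by
    rintro ⟨⟨x, hx, ht⟩, hn⟩
    apply Subtype.ext; apply Subtype.ext; funext k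
    show extW m (trunc (m+3) x) k = x k
    rcases Nat.lt_or_ge k (m+3) with h | h
    · rw [extW_lt _ h, trunc_lt x h]
    rcases Nat.lt_or_ge k (m+4) with h2 | h2
    · obtain rfl : k = m+3 := by omega
      rw [extW_eq, trunc_lt x (by omega), trunc_lt x (by omega)]
      have hsE : stepOK (x (m+2) - x (m+1)) := hx.1 (m+1) (by omega)
      have hsD : stepOK (x (m+3) - x (m+2)) := hx.1 (m+2) (by omega)
      have hsP : stepOK (x (m+1+2) - x (m+1)) := hx.2 (m+1) (by omega)
      rw [show x (m+1+2) - x (m+1) =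
        (x (m+2) - x (m+1)) + (x (m+3) - x (m+2)) from by ring] at hsP
      unfold NP at hn
      push_neg at hn
      rw [kW4 _ _ ⟨hsE, hsD, hsP, hn.1, hn.2⟩]
      ring
    · rw [extW_gt _ h2, ht k (by omega)]
  right_inv := by
    rintro ⟨y, hy, hty⟩
    apply Subtype.ext; funext k
    show trunc (m+3) (extW m y) k = y k
    rcases Nat.lt_or_ge k (m+3) with h | h
    · rw [trunc_lt _ h, extW_lt y h]
    · rw [trunc_ge _ h, hty k h]

/-- extension of a length `m+2` canon by two steps ending "narrow" -/
def extN (m : ℕ) (z : ℕ → ZMod 7) : ℕ → ZMod 7 := fun k =>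
  if k < m+2 then z k else if k = m+2 then z (m+1) + s3 (z (m+1) - z m)
  else if k = m+3 then z (m+1) + s3 (z (m+1) - z m) + s1 (z (m+1) - z m) else 0

lemma extN_lt {m k : ℕ} (z : ℕ → ZMod 7) (h : k < m+2) : extN m z k = z k := if_pos h
lemma extN_eq2 (m : ℕ) (z : ℕ → ZMod 7) :
    extN m z (m+2) = z (m+1) + s3 (z (m+1) - z m) := by
  unfold extN; rw [if_neg (by omega), if_pos rfl]
lemma extN_eq3 (m : ℕ) (z : ℕ → ZMod 7) :
    extN m z (m+3) = z (m+1) + s3 (z (m+1) - z m) + s1 (z (m+1) - z m) := by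
  unfold extN; rw [if_neg (by omega), if_neg (by omega), if_pos rfl]
lemma extN_gt {m k : ℕ} (z : ℕ → ZMod 7) (h : m+4 ≤ k) : extN m z k = 0 := by
  unfold extN; rw [if_neg (by omega), if_neg (by omega), if_neg (by omega)]

lemma extN_good (m : ℕ) (z : ℕ → ZMod 7) (hz : Good (m+2) z) : Good (m+4) (extN m z) := by
  have hsE : stepOK (z (m+1) - z m) := by
    have := hz.1 m (by omega)
    rwa [show m + 1 = m + 1 from rfl] at this
  constructor
  · intro k hk
    rcases Nat.lt_or_ge k (m+1) with h | h
    · rw [extN_lt z (by omega), extN_lt z (by omega)]; exact hz.1 k (by omega)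
    rcases Nat.lt_or_ge k (m+2) with h2 | h2
    · obtain rfl : k = m+1 := by omega
      have e : extN m z (m+1+1) - extN m z (m+1) = s3 (z (m+1) - z m) := by
        rw [show m+1+1 = m+2 from rfl, extN_eq2, extN_lt z (by omega)]; ring
      rw [e]; exact kW1 _
    · obtain rfl : k = m+2 := by omega
      have e : extN m z (m+2+1) - extN m z (m+2) = s1 (z (m+1) - z m) := by
        rw [show m+2+1 = m+3 from rfl, extN_eq3, extN_eq2]; ring
      rw [e]; exact kN1 _
  · intro k hk
    rcases Nat.lt_or_ge k m with h | h
    · rw [extN_lt z (by omega), extN_lt z (by omega)]; exact hz.2 k (by omega)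
    rcases Nat.lt_or_ge k (m+1) with h2 | h2
    · rw [show k = m from by omega]
      have e : extN m z (m+2) - extN m z m =
          (z (m+1) - z m) + s3 (z (m+1) - z m) := by
        rw [extN_eq2, extN_lt z (by omega)]; ring
      rw [e]; exact kW2 _ hsE
    · obtain rfl : k = m+1 := by omega
      have e : extN m z (m+1+2) - extN m z (m+1) =
          s3 (z (m+1) - z m) + s1 (z (m+1) - z m) := by
        rw [show m+1+2 = m+3 from rfl, extN_eq3, extN_lt z (by omega)]; ring
      rw [e]; exact kN2 _
lemma extN_tail (m : ℕ) (z : ℕ → ZMod 7) : Tail0 (m+4) (extN m z) :=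
  fun _ hk => extN_gt z hk

lemma extN_NP (m : ℕ) (z : ℕ → ZMod 7) : NP m (extN m z) := by
  unfold NP
  rw [extN_eq3, extN_eq2, show z (m+1) + s3 (z (m+1) - z m) + s1 (z (m+1) - z m) -
    (z (m+1) + s3 (z (m+1) - z m)) = s1 (z (m+1) - z m) from by ring]
  exact kN3 _

def eN (m : ℕ) : {x : C (m+4) // NP m x.1} ≃ C (m+2) where
  toFun x := ⟨trunc (m+2) x.1.1, trunc_good (by omega) _ x.1.2.1, trunc_tail _ _⟩
  invFun z := ⟨⟨extN m z.1, extN_good m z.1 z.2.1, extN_tail m z.1⟩, extN_NP m z.1⟩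
  left_inv := by
    rintro ⟨⟨x, hx, ht⟩, hn⟩
    apply Subtype.ext; apply Subtype.ext; funext k
    show extN m (trunc (m+2) x) k = x k
    have hsE : stepOK (x (m+1) - x m) := hx.1 m (by omega)
    have hsD0 : stepOK (x (m+2) - x (m+1)) := hx.1 (m+1) (by omega)
    have hsD1 : stepOK (x (m+3) - x (m+2)) := hx.1 (m+2) (by omega)
    have hp1 : stepOK (x (m+2) - x m) := hx.2 m (by omega)
    have hp2 : stepOK (x (m+1+2) - x (m+1)) := hx.2 (m+1) (by omega)
    rw [show x (m+2) - x m = (x (m+1) - x m) + (x (m+2) - x (m+1)) from by ring] at hp1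
    rw [show x (m+1+2) - x (m+1) =
      (x (m+2) - x (m+1)) + (x (m+3) - x (m+2)) from by ring] at hp2
    unfold NP at hn
    obtain ⟨hA, hB⟩ := kN4 _ _ _ ⟨hsE, hsD0, hsD1, hp1, hp2, hn⟩
    rcases Nat.lt_or_ge k (m+2) with h | h
    · rw [extN_lt _ h, trunc_lt x h]
    rcases Nat.lt_or_ge k (m+3) with h2 | h2
    · obtain rfl : k = m+2 := by omega
      rw [extN_eq2, trunc_lt x (by omega), trunc_lt x (by omega), hA]
      ring
    rcases Nat.lt_or_ge k (m+4) with h3 | h3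
    · obtain rfl : k = m+3 := by omega
      rw [extN_eq3, trunc_lt x (by omega), trunc_lt x (by omega), hA, hB]
      ring
    · rw [extN_gt _ h3, ht k (by omega)]
  right_inv := by
    rintro ⟨z, hz, htz⟩
    apply Subtype.ext; funext k
    show trunc (m+2) (extN m z) k = z k
    rcases Nat.lt_or_ge k (m+2) with h | h
    · rw [trunc_lt _ h, extN_lt z h]
    · rw [trunc_ge _ h, htz k h]

lemma card_rec (m : ℕ) : Nat.card (C (m+4)) = Nat.card (C (m+3)) + Nat.card (C (m+2)) := by
  classical
  have h0 : Nat.card (C (m+4)) =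
      Nat.card ({x : C (m+4) // NP m x.1} ⊕ {x : C (m+4) // ¬ NP m x.1}) :=
    (Nat.card_congr (Equiv.sumCompl _)).symm
  rw [h0, Nat.card_sum, Nat.card_congr (eN m), Nat.card_congr (eW m), Nat.add_comm]

/-- initial values and Fibonacci recurrence for the counts. -/
theorem fib_scheme_counts :
    V SFib 1 = 7 ∧ V SFib 2 = 28 ∧ V SFib 3 = 42 ∧
    ∀ n : ℕ, 4 ≤ n → V SFib n = V SFib (n - 1) + V SFib (n - 2) := by
  refine ⟨?_, ?_, ?_, ?_⟩
  · rw [cardV]; exact cardC1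
  · rw [cardV]; exact cardC2
  · rw [cardV]; exact cardC3
  · intro n hn
    obtain ⟨m, rfl⟩ : ∃ m, n = m + 4 := ⟨n - 4, by omega⟩
    rw [show m + 4 - 1 = m + 3 from rfl, show m + 4 - 2 = m + 2 from rfl,
      cardV, cardV, cardV]
    exact card_rec m
end

section
/- Flexibility is invariant under inversion: given S = {(t_i, p_i)}, define S' with t_i' = t_i and p_i' = 5 − p_i if voice i is the marked bass, p_i' = −p_i otherwise (bass marking preserved). Then the map (x_k) ↦ (−x_k) is a bijection from valid canons of S to valid canons of S', so V_n(S') = V_n(S) and λ(S') = λ(S). -/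
open Filter

lemma key (p q xa xb : ZMod 7) (bi bj : Bool)
    (h1 : (xa + p) - (xb + q) ≠ 1 ∧ (xa + p) - (xb + q) ≠ 6 ∧
      (bj = true → (xa + p) - (xb + q) ≠ 3))
    (h2 : (xb + q) - (xa + p) ≠ 1 ∧ (xb + q) - (xa + p) ≠ 6 ∧
      (bi = true → (xb + q) - (xa + p) ≠ 3)) :
    ((-xa + (if bi then 5 - p else -p)) - (-xb + (if bj then 5 - q else -q)) ≠ 1 ∧
     (-xa + (if bi then 5 - p else -p)) - (-xb + (if bj then 5 - q else -q)) ≠ 6 ∧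
     (bj = true → (-xa + (if bi then 5 - p else -p)) - (-xb + (if bj then 5 - q else -q)) ≠ 3)) := by
  revert h1 h2; revert p q xa xb bi bj; decide

lemma fwd (S : List Voice) (n : ℕ) (x : ℕ → ZMod 7) (h : ValidOn S n x) :
    ValidOn (S.map fun v => ⟨v.t, if v.bass then 5 - v.p else -v.p, v.bass⟩) n
      (fun k => -x k) := by
  intro vi hvi vj hvj a b ha hb hab
  rw [List.mem_map] at hvi hvj
  obtain ⟨v, hv, rfl⟩ := hvi
  obtain ⟨w, hw, rfl⟩ := hvj
  simp only at hab ⊢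
  have h1 := h v hv w hw a b ha hb hab
  have h2 := h w hw v hv b a hb ha hab.symm
  simp only [Set.mem_insert_iff, Set.mem_singleton_iff, not_or] at h1 h2 ⊢
  have := key v.p w.p (x a) (x b) v.bass w.bass
    ⟨h1.1.1, h1.1.2, h1.2⟩ ⟨h2.1.1, h2.1.2, h2.2⟩
  exact ⟨⟨this.1, this.2.1⟩, this.2.2⟩

lemma double (S : List Voice) :
    ((S.map fun v => (⟨v.t, if v.bass then 5 - v.p else -v.p, v.bass⟩ : Voice)).map
      fun v => (⟨v.t, if v.bass then 5 - v.p else -v.p, v.bass⟩ : Voice)) = S := by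
  rw [List.map_map]
  have h : ((fun v => (⟨v.t, if v.bass then 5 - v.p else -v.p, v.bass⟩ : Voice)) ∘
      fun v => (⟨v.t, if v.bass then 5 - v.p else -v.p, v.bass⟩ : Voice)) = id := by
    funext v
    cases v with
    | mk t p bass =>
      cases bass <;> simp [Function.comp, sub_sub_cancel]
  rw [h, List.map_id]

lemma iff_part (S : List Voice) (n : ℕ) (x : ℕ → ZMod 7) :
    ValidOn S n x ↔
      ValidOn (S.map fun v => ⟨v.t, if v.bass then 5 - v.p else -v.p, v.bass⟩) n
        (fun k => -x k) := by
  constructor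
  · exact fwd S n x
  · intro h
    have := fwd _ n (fun k => -x k) h
    rw [double] at this
    simpa using this

/-- flexibility is invariant under inversion. -/
theorem inversion_invariance (S : List Voice) :
    (∀ (n : ℕ) (x : ℕ → ZMod 7),
      ValidOn S n x ↔
        ValidOn (S.map fun v => ⟨v.t, if v.bass then 5 - v.p else -v.p, v.bass⟩) n
          (fun k => -x k)) ∧
    (∀ n : ℕ,
      V (S.map fun v => ⟨v.t, if v.bass then 5 - v.p else -v.p, v.bass⟩) n = V S n) ∧
    (∀ L : ℝ,
      Tendsto (fun n : ℕ => (V S n : ℝ) ^ (1 / (n : ℝ))) atTop (nhds L) →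
      Tendsto (fun n : ℕ =>
        (V (S.map fun v => ⟨v.t, if v.bass then 5 - v.p else -v.p, v.bass⟩) n : ℝ)
          ^ (1 / (n : ℝ))) atTop (nhds L)) := by
  have hV : ∀ n : ℕ,
      V (S.map fun v => ⟨v.t, if v.bass then 5 - v.p else -v.p, v.bass⟩) n = V S n := by
    intro n
    unfold V
    apply Nat.card_congr
    exact
      { toFun := fun ⟨x, hx, hz⟩ => ⟨fun k => -x k,
          (iff_part S n (fun k => -x k)).mpr (by simpa using hx),
          fun k hk => by simp [hz k hk]⟩
        invFun := fun ⟨x, hx, hz⟩ => ⟨fun k => -x k,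
          (iff_part S n x).mp hx,
          fun k hk => by simp [hz k hk]⟩
        left_inv := fun ⟨x, hx, hz⟩ => Subtype.ext (funext fun k => neg_neg _)
        right_inv := fun ⟨x, hx, hz⟩ => Subtype.ext (funext fun k => neg_neg _) }
  refine ⟨iff_part S, hV, fun L hL => ?_⟩
  simpa only [hV] using hL
end

section
/- Time dilation by a positive integer c decomposes canons: if S = {(t_i, p_i)} is a scheme and S' = {(c·t_i, p_i)} (bass marking preserved), then a melody (x_1, ..., x_n) is a valid canon for S' if and only if each of the c subsequences (x_a, x_{c+a}, x_{2c+a}, ...) for 1 ≤ a ≤ c is a valid canon for S. Consequently, writing n = qc + ℓ with 0 ≤ ℓ < c, one has V_n(S') = V_q(S)^{c−ℓ} · V_{q+1}(S)^{ℓ}. -/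
open Filter

lemma key_lt (c : ℕ) (hc : 0 < c) (n a j : ℕ) (ha : a < c) :
    j < (n + c - 1 - a) / c ↔ j * c + a < n := by
  rw [Nat.lt_iff_add_one_le, Nat.le_div_iff_mul_le hc, add_one_mul]
  generalize j * c = m
  omega

lemma dil_iff (S : List Voice) (c : ℕ) (hc : 0 < c) (n : ℕ) (x : ℕ → ZMod 7) :
    ValidOn (S.map fun v => ⟨(c : ℤ) * v.t, v.p, v.bass⟩) n x ↔
      ∀ a < c, ValidOn S ((n + c - 1 - a) / c) (fun j => x (j * c + a)) := by
  constructor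
  · intro h a ha vi hvi vj hvj j1 j2 hj1 hj2 heq
    have h1 : j1 * c + a < n := (key_lt c hc n a j1 ha).1 hj1
    have h2 : j2 * c + a < n := (key_lt c hc n a j2 ha).1 hj2
    have := h ⟨(c : ℤ) * vi.t, vi.p, vi.bass⟩
      (List.mem_map_of_mem hvi) ⟨(c : ℤ) * vj.t, vj.p, vj.bass⟩
      (List.mem_map_of_mem hvj) (j1 * c + a) (j2 * c + a) h1 h2
      (by push_cast; linear_combination (c : ℤ) * heq)
    exact this
  · intro h vi' hvi' vj' hvj' a b ha hb heq
    obtain ⟨vi, hvi, rfl⟩ := List.mem_map.1 hvi'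
    obtain ⟨vj, hvj, rfl⟩ := List.mem_map.1 hvj'
    simp only at heq ⊢
    have hc' : (c : ℤ) ≠ 0 := by exact_mod_cast hc.ne'
    have hmod : a % c = b % c := by
      have hd : (c : ℤ) ∣ (a : ℤ) - b := ⟨vj.t - vi.t, by linarith⟩
      have h0 : (a : ℤ) % c = (b : ℤ) % c :=
        Int.emod_eq_emod_iff_emod_sub_eq_zero.2 (Int.emod_eq_zero_of_dvd hd)
      exact_mod_cast h0
    have hrc : a % c < c := Nat.mod_lt _ hc
    have ha2 : a / c * c + a % c = a := Nat.div_add_mod' a c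
    have hb2 : b / c * c + a % c = b := by
      have h1 := Nat.div_add_mod' b c
      rw [hmod]; exact h1
    have hca : ((a / c : ℕ) : ℤ) * c + ((a % c : ℕ) : ℤ) = (a : ℤ) := by
      exact_mod_cast congrArg (fun m : ℕ => (m : ℤ)) ha2
    have hcb : ((b / c : ℕ) : ℤ) * c + ((a % c : ℕ) : ℤ) = (b : ℤ) := by
      exact_mod_cast congrArg (fun m : ℕ => (m : ℤ)) hb2
    have hteq : ((a / c : ℕ) : ℤ) + vi.t = ((b / c : ℕ) : ℤ) + vj.t :=
      mul_left_cancel₀ hc' (by linear_combination heq + hca - hcb)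
    have happ := h (a % c) hrc vi hvi vj hvj (a / c) (b / c)
      ((key_lt c hc n (a % c) (a / c) hrc).2 (by rw [ha2]; exact ha))
      ((key_lt c hc n (a % c) (b / c) hrc).2 (by rw [hb2]; exact hb)) hteq
    simpa only [ha2, hb2] using happ

/-- The dilated scheme. -/
def dilate (c : ℕ) (S : List Voice) : List Voice :=
  S.map fun v => ⟨(c : ℤ) * v.t, v.p, v.bass⟩

lemma dil_iff' (S : List Voice) (c : ℕ) (hc : 0 < c) (n : ℕ) (x : ℕ → ZMod 7) :
    ValidOn (dilate c S) n x ↔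
      ∀ a < c, ValidOn S ((n + c - 1 - a) / c) (fun j => x (j * c + a)) :=
  dil_iff S c hc n x

/-- time dilation by a positive integer decomposes canons. -/
theorem time_dilation_decomposition (S : List Voice) (c : ℕ) (hc : 0 < c) :
    (∀ (n : ℕ) (x : ℕ → ZMod 7),
      ValidOn (S.map fun v => ⟨(c : ℤ) * v.t, v.p, v.bass⟩) n x ↔
        ∀ a < c, ValidOn S ((n + c - 1 - a) / c) (fun j => x (j * c + a))) ∧
    (∀ q ℓ : ℕ, ℓ < c →
      V (S.map fun v => ⟨(c : ℤ) * v.t, v.p, v.bass⟩) (q * c + ℓ) =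
        V S q ^ (c - ℓ) * V S (q + 1) ^ ℓ) := by
  refine ⟨fun n x => dil_iff S c hc n x, fun q ℓ hl => ?_⟩
  show V (dilate c S) (q * c + ℓ) = V S q ^ (c - ℓ) * V S (q + 1) ^ ℓ
  set n := q * c + ℓ with hn
  set L : ℕ → ℕ := fun a => (n + c - 1 - a) / c with hLdef
  have hL : ∀ a < c, L a = if a < ℓ then q + 1 else q := by
    intro a ha
    simp only [hLdef]
    by_cases h : a < ℓ
    · have e : c * (q + 1) = q * c + c := by ring
      have h1 : n + c - 1 - a = c * (q + 1) + (ℓ - 1 - a) := by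
        rw [e, hn]; generalize q * c = m; omega
      rw [h1, Nat.mul_add_div hc, Nat.div_eq_of_lt (by omega)]
      simp [h]
    · have e : c * q = q * c := by ring
      have h1 : n + c - 1 - a = c * q + (ℓ + c - 1 - a) := by
        rw [e, hn]; generalize q * c = m; omega
      rw [h1, Nat.mul_add_div hc, Nat.div_eq_of_lt (by omega)]
      simp [h]
  have key : ∀ a j, a < c → (j < L a ↔ j * c + a < n) :=
    fun a j ha => key_lt c hc n a j ha
  have hmodlem : ∀ (j a : ℕ), a < c → (j * c + a) % c = a := by
    intro j a ha
    rw [Nat.add_comm, Nat.add_mul_mod_self_right, Nat.mod_eq_of_lt ha]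
  have hdivlem : ∀ (j a : ℕ), a < c → (j * c + a) / c = j := by
    intro j a ha
    rw [Nat.add_comm, Nat.add_mul_div_right _ _ hc, Nat.div_eq_of_lt ha, Nat.zero_add]
  let T : ℕ → Type := fun m => {y : ℕ → ZMod 7 // ValidOn S m y ∧ ∀ k, m ≤ k → y k = 0}
  have e : {x : ℕ → ZMod 7 // ValidOn (dilate c S) n x ∧ ∀ k, n ≤ k → x k = 0} ≃
      ∀ a : Fin c, T (L a.1) :=
    { toFun := fun x a => ⟨fun j => x.1 (j * c + a.1),
        (dil_iff' S c hc n x.1).1 x.2.1 a.1 a.2,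
        by
          intro k hk
          apply x.2.2
          by_contra hlt
          push_neg at hlt
          exact absurd ((key a.1 k a.2).2 hlt) (by omega)⟩
      invFun := fun y => ⟨fun k => (y ⟨k % c, Nat.mod_lt _ hc⟩).1 (k / c),
        by
          apply (dil_iff' S c hc n _).2
          intro a ha
          have heq : (fun j => (fun k => (y ⟨k % c, Nat.mod_lt k hc⟩).1 (k / c)) (j * c + a))
              = (y ⟨a, ha⟩).1 := by
            funext j
            have h3 : (⟨(j * c + a) % c, Nat.mod_lt _ hc⟩ : Fin c) = ⟨a, ha⟩ :=
              Fin.ext (hmodlem j a ha)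
            simp only [hdivlem j a ha]
            exact congrArg (fun v : Fin c => (y v).1 j) h3
          rw [heq]
          exact (y ⟨a, ha⟩).2.1,
        by
          intro k hk
          apply (y ⟨k % c, Nat.mod_lt _ hc⟩).2.2
          by_contra hlt
          push_neg at hlt
          have h5 := (key (k % c) (k / c) (Nat.mod_lt _ hc)).1 hlt
          rw [Nat.div_add_mod' k c] at h5
          omega⟩
      left_inv := by
        intro x
        apply Subtype.ext
        funext k
        show x.1 (k / c * c + k % c) = x.1 k
        rw [Nat.div_add_mod' k c]
      right_inv := by
        intro y
        funext a
        apply Subtype.ext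
        funext j
        show (y ⟨(j * c + a.1) % c, Nat.mod_lt _ hc⟩).1 ((j * c + a.1) / c) = (y a).1 j
        have h3 : (⟨(j * c + a.1) % c, Nat.mod_lt _ hc⟩ : Fin c) = a :=
          Fin.ext (hmodlem j a.1 a.2)
        rw [h3, hdivlem j a.1 a.2] }
  have hcard : V (dilate c S) n = ∏ a : Fin c, V S (L a.1) := by
    rw [V, Nat.card_congr e, Nat.card_pi]
    rfl
  rw [hcard, Fin.prod_univ_eq_prod_range (fun a => V S (L a)) c]
  have hprod : ∀ a ∈ Finset.range c, V S (L a) = if a < ℓ then V S (q + 1) else V S q := by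
    intro a ha
    rw [hL a (Finset.mem_range.1 ha)]
    split_ifs <;> rfl
  rw [Finset.prod_congr rfl hprod, Finset.prod_ite, Finset.prod_const, Finset.prod_const]
  have e1 : (Finset.range c).filter (fun a => a < ℓ) = Finset.range ℓ := by
    ext a; simp only [Finset.mem_filter, Finset.mem_range]; omega
  have e2 : ((Finset.range c).filter (fun a => ¬ a < ℓ)).card = c - ℓ := by
    have h6 := Finset.card_filter_add_card_filter_not
      (s := Finset.range c) (p := fun a => a < ℓ)
    rw [e1] at h6
    simp only [Finset.card_range] at h6
    omega
  rw [e1, Finset.card_range, e2, mul_comm]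
end

section
/- If S' is obtained from S by dilating all time displacements by a positive integer c, and λ(S) = lim_{n→∞} V_n(S)^{1/n} exists and is ≥ 1, then λ(S') exists and λ(S') = λ(S). -/
open Filter

namespace TD

/-- the dilated scheme -/
def dil (S : List Voice) (c : ℕ) : List Voice :=
  S.map fun v => ⟨(c : ℤ) * v.t, v.p, v.bass⟩

/-- length of the `r`-th slice of a melody of length `n` cut into `c` strands -/
def m (c n r : ℕ) : ℕ := (n + c - 1 - r) / c

lemma pos_iff {c : ℕ} (hc : 0 < c) (n r k : ℕ) (hr : r < c) :
    c * k + r < n ↔ k < m c n r := by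
  unfold m
  rw [show (k < (n + c - 1 - r) / c) ↔ (k + 1 ≤ (n + c - 1 - r) / c) from Iff.rfl,
    Nat.le_div_iff_mul_le hc]
  have h1 : (k + 1) * c = c * k + c := by ring
  omega

lemma valid_slice {S : List Voice} {c : ℕ} (hc : 0 < c) {n : ℕ} {x : ℕ → ZMod 7}
    (hx : ValidOn (dil S c) n x) {r : ℕ} (hr : r < c) :
    ValidOn S (m c n r) (fun k => x (c * k + r)) := by
  intro vi hvi vj hvj a b ha hb ht
  exact hx ⟨(c : ℤ) * vi.t, vi.p, vi.bass⟩ (List.mem_map.mpr ⟨vi, hvi, rfl⟩)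
    ⟨(c : ℤ) * vj.t, vj.p, vj.bass⟩ (List.mem_map.mpr ⟨vj, hvj, rfl⟩)
    (c * a + r) (c * b + r) ((pos_iff hc n r a hr).mpr ha) ((pos_iff hc n r b hr).mpr hb)
    (by push_cast; linear_combination (c : ℤ) * ht)

lemma valid_unslice {S : List Voice} {c : ℕ} (hc : 0 < c) {n : ℕ} {x : ℕ → ZMod 7}
    (hx : ∀ r, r < c → ValidOn S (m c n r) (fun k => x (c * k + r))) :
    ValidOn (dil S c) n x := by
  intro vi' hvi' vj' hvj' A B hA hB ht
  obtain ⟨vi, hvi, rfl⟩ := List.mem_map.mp hvi'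
  obtain ⟨vj, hvj, rfl⟩ := List.mem_map.mp hvj'
  have hAd : c * (A / c) + A % c = A := Nat.div_add_mod A c
  have hBd : c * (B / c) + B % c = B := Nat.div_add_mod B c
  have hrA : A % c < c := Nat.mod_lt _ hc
  have hrB : B % c < c := Nat.mod_lt _ hc
  have hAZ : (A : ℤ) = (c : ℤ) * (A / c : ℕ) + (A % c : ℕ) := by exact_mod_cast hAd.symm
  have hBZ : (B : ℤ) = (c : ℤ) * (B / c : ℕ) + (B % c : ℕ) := by exact_mod_cast hBd.symm
  simp only at ht
  rw [hAZ, hBZ] at ht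
  have hd : ((A % c : ℕ) : ℤ) - ((B % c : ℕ) : ℤ) =
      (c : ℤ) * ((B / c : ℕ) + vj.t - (A / c : ℕ) - vi.t) := by linear_combination ht
  have hd0 : ((B / c : ℕ) : ℤ) + vj.t - (A / c : ℕ) - vi.t = 0 := by
    by_contra hne
    have h1 : (1 : ℤ) ≤ |((B / c : ℕ) : ℤ) + vj.t - (A / c : ℕ) - vi.t| :=
      Int.one_le_abs (by omega)
    have h2 : (c : ℤ) ≤ (c : ℤ) * |((B / c : ℕ) : ℤ) + vj.t - (A / c : ℕ) - vi.t| :=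
      le_mul_of_one_le_right (by positivity) h1
    have h3 : |((A % c : ℕ) : ℤ) - ((B % c : ℕ) : ℤ)| =
        (c : ℤ) * |((B / c : ℕ) : ℤ) + vj.t - (A / c : ℕ) - vi.t| := by
      rw [hd, abs_mul, abs_of_nonneg (by positivity : (0:ℤ) ≤ (c:ℤ))]
    have h4 : |((A % c : ℕ) : ℤ) - ((B % c : ℕ) : ℤ)| < (c : ℤ) := by
      rw [abs_lt]; constructor <;> [push_cast; push_cast] <;> omega
    linarith
  have hrr : A % c = B % c := by
    rw [hd0, mul_zero] at hd; omega
  have htime : ((A / c : ℕ) : ℤ) + vi.t = ((B / c : ℕ) : ℤ) + vj.t := by linarith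
  have ha' : A / c < m c n (A % c) := (pos_iff hc n _ _ hrA).mp (by rw [hAd]; exact hA)
  have hb' : B / c < m c n (A % c) := by
    rw [hrr]; exact (pos_iff hc n _ _ hrB).mp (by rw [hBd]; exact hB)
  have := hx (A % c) hrA vi hvi vj hvj (A / c) (B / c) ha' hb' htime
  simp only at this
  rw [← hAd, ← hBd, ← hrr]
  exact this

/-- slicing a melody into `c` strands is a bijection on valid normalized canons -/
noncomputable def sliceEquiv (S : List Voice) {c : ℕ} (hc : 0 < c) (n : ℕ) :
    {x : ℕ → ZMod 7 // ValidOn (dil S c) n x ∧ ∀ k, n ≤ k → x k = 0} ≃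
    ∀ r : Fin c, {y : ℕ → ZMod 7 //
      ValidOn S (m c n r.val) y ∧ ∀ k, m c n r.val ≤ k → y k = 0} where
  toFun x r := ⟨fun k => x.1 (c * k + r.val),
    valid_slice hc x.2.1 r.2,
    fun k hk => x.2.2 _ (le_of_not_gt fun hlt =>
      Nat.not_lt.mpr hk ((pos_iff hc n r.val k r.2).mp hlt))⟩
  invFun y := ⟨fun a => (y ⟨a % c, Nat.mod_lt a hc⟩).1 (a / c),
    by
      apply valid_unslice hc
      intro r hr
      have hfun : (fun k => (y ⟨(c * k + r) % c, Nat.mod_lt (c * k + r) hc⟩).1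
          ((c * k + r) / c)) = (y ⟨r, hr⟩).1 := by
        funext k
        have h2 : (c * k + r) / c = k := by
          rw [Nat.mul_add_div hc, Nat.div_eq_of_lt hr, Nat.add_zero]
        have h1 : (c * k + r) % c = r := by
          rw [add_comm, Nat.add_mul_mod_self_left, Nat.mod_eq_of_lt hr]
        rw [h2]
        exact congrFun (congrArg (fun i => (y i).1) (Fin.ext h1)) k
      show ValidOn S (m c n r) (fun k => (y ⟨(c * k + r) % c, _⟩).1 ((c * k + r) / c))
      rw [hfun]
      exact (y ⟨r, hr⟩).2.1,
    by
      intro a ha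
      have hr : a % c < c := Nat.mod_lt a hc
      have hk : m c n (a % c) ≤ a / c := le_of_not_gt fun hlt =>
        Nat.not_lt.mpr ha (by
          have := (pos_iff hc n (a % c) (a / c) hr).mpr hlt
          rwa [Nat.div_add_mod a c] at this)
      exact (y ⟨a % c, Nat.mod_lt a hc⟩).2.2 _ hk⟩
  left_inv x := by
    apply Subtype.ext
    funext a
    exact congrArg x.1 (Nat.div_add_mod a c)
  right_inv y := by
    funext r
    apply Subtype.ext
    funext k
    show (y ⟨(c * k + r.val) % c, _⟩).1 ((c * k + r.val) / c) = (y r).1 k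
    have h2 : (c * k + r.val) / c = k := by
      rw [Nat.mul_add_div hc, Nat.div_eq_of_lt r.2, Nat.add_zero]
    have h1 : (c * k + r.val) % c = r.val := by
      rw [add_comm, Nat.add_mul_mod_self_left, Nat.mod_eq_of_lt r.2]
    rw [h2]
    exact congrFun (congrArg (fun i => (y i).1) (Fin.ext h1)) k

lemma card_dil (S : List Voice) {c : ℕ} (hc : 0 < c) (n : ℕ) :
    V (dil S c) n = ∏ r : Fin c, V S (m c n r.val) := by
  unfold V
  rw [Nat.card_congr (sliceEquiv S hc n), Nat.card_pi]

lemma key (S : List Voice) {c : ℕ} (hc : 0 < c) (n : ℕ) :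
    V (dil S c) n = V S (n / c + 1) ^ (n % c) * V S (n / c) ^ (c - n % c) := by
  rw [card_dil S hc n]
  have h3 : n % c < c := Nat.mod_lt _ hc
  have hdm : c * (n / c) + n % c = n := Nat.div_add_mod n c
  have hm : ∀ r < c, m c n r = if r < n % c then n / c + 1 else n / c := by
    intro r hr
    unfold m
    by_cases hrl : r < n % c
    · rw [if_pos hrl]
      have e : n + c - 1 - r = c * (n / c + 1) + (n % c - 1 - r) := by
        have : c * (n / c + 1) = c * (n / c) + c := by ring
        omega
      have hlt : (n % c - 1 - r) / c = 0 := Nat.div_eq_of_lt (by omega)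
      rw [e, Nat.mul_add_div hc, hlt, Nat.add_zero]
    · rw [if_neg hrl]
      have e : n + c - 1 - r = c * (n / c) + (c + n % c - 1 - r) := by omega
      have hlt : (c + n % c - 1 - r) / c = 0 := Nat.div_eq_of_lt (by omega)
      rw [e, Nat.mul_add_div hc, hlt, Nat.add_zero]
  rw [Fin.prod_univ_eq_prod_range (fun r => V S (m c n r)) c]
  have hcongr : ∏ r ∈ Finset.range c, V S (m c n r) =
      ∏ r ∈ Finset.range c, if r < n % c then V S (n / c + 1) else V S (n / c) :=
    Finset.prod_congr rfl (fun r hr => by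
      rw [hm r (Finset.mem_range.mp hr)]
      split <;> rfl)
  rw [hcongr, Finset.prod_ite, Finset.prod_const, Finset.prod_const]
  have hf1 : Finset.filter (fun r => r < n % c) (Finset.range c) = Finset.range (n % c) := by
    ext a; simp [Finset.mem_filter, Finset.mem_range]; omega
  have hf2 : Finset.filter (fun r => ¬ r < n % c) (Finset.range c) =
      Finset.Ico (n % c) c := by
    ext a; simp [Finset.mem_filter, Finset.mem_range, Finset.mem_Ico]; omega
  rw [hf1, hf2, Finset.card_range, Nat.card_Ico]

end TD

/-- time dilation by a positive integer preserves the flexibility. -/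
theorem time_dilation_flexibility (S : List Voice) (c : ℕ) (hc : 0 < c)
    (L : ℝ) (hL : 1 ≤ L)
    (h : Tendsto (fun n : ℕ => (V S n : ℝ) ^ (1 / (n : ℝ))) atTop (nhds L)) :
    Tendsto (fun n : ℕ =>
      (V (S.map fun v => ⟨(c : ℤ) * v.t, v.p, v.bass⟩) n : ℝ) ^ (1 / (n : ℝ)))
      atTop (nhds L) := by
  have hmap : (S.map fun v => ⟨(c : ℤ) * v.t, v.p, v.bass⟩) = TD.dil S c := rfl
  rw [hmap]
  rw [Metric.tendsto_atTop] at h ⊢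
  intro ε hε
  set ε' : ℝ := min (ε / 2) (1 / 2) with hε'def
  have hε' : 0 < ε' := lt_min (by linarith) (by norm_num)
  have hε'le : ε' ≤ ε / 2 := min_le_left _ _
  have hε'half : ε' ≤ 1 / 2 := min_le_right _ _
  have hbase : (0 : ℝ) < L - ε' := by linarith
  obtain ⟨Q0, hQ0⟩ := h ε' hε'
  set Q1 := max Q0 1 with hQ1def
  have hbound : ∀ q, Q1 ≤ q →
      (L - ε') ^ q ≤ (V S q : ℝ) ∧ (V S q : ℝ) ≤ (L + ε') ^ q := by
    intro q hq
    have h1 := hQ0 q (le_trans (le_max_left _ _) hq)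
    rw [Real.dist_eq, abs_lt] at h1
    have hq1 : 1 ≤ q := le_trans (le_max_right _ _) hq
    have hqR : (0 : ℝ) < (q : ℝ) := by exact_mod_cast hq1
    have hV : (0 : ℝ) ≤ (V S q : ℝ) := Nat.cast_nonneg _
    have hid : ((V S q : ℝ) ^ (1 / (q : ℝ))) ^ q = (V S q : ℝ) := by
      rw [← Real.rpow_natCast ((V S q : ℝ) ^ (1 / (q : ℝ))) q, ← Real.rpow_mul hV,
        one_div, inv_mul_cancel₀ (ne_of_gt hqR), Real.rpow_one]
    constructor
    · calc (L - ε') ^ q ≤ ((V S q : ℝ) ^ (1 / (q : ℝ))) ^ q :=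
            pow_le_pow_left₀ (le_of_lt hbase) (by linarith [h1.1]) q
        _ = (V S q : ℝ) := hid
    · calc (V S q : ℝ) = ((V S q : ℝ) ^ (1 / (q : ℝ))) ^ q := hid.symm
        _ ≤ (L + ε') ^ q :=
            pow_le_pow_left₀ (Real.rpow_nonneg hV _) (by linarith [h1.2]) q
  refine ⟨c * (Q1 + 1), fun n hn => ?_⟩
  have h3 : n % c < c := Nat.mod_lt _ hc
  have hdm : c * (n / c) + n % c = n := Nat.div_add_mod n c
  have hq : Q1 + 1 ≤ n / c := by
    rw [Nat.le_div_iff_mul_le hc]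
    have : (Q1 + 1) * c = c * (Q1 + 1) := by ring
    omega
  have hn0 : 0 < n := by
    have : 0 < c * (Q1 + 1) := Nat.mul_pos hc (by omega)
    omega
  have hnR : (0 : ℝ) < (n : ℝ) := by exact_mod_cast hn0
  have hexp : (n / c + 1) * (n % c) + (n / c) * (c - n % c) = n := by
    have h5 : (n / c + 1) * (n % c) = n / c * (n % c) + n % c := by ring
    have h6 : n / c * (c - n % c) + n / c * (n % c) = n / c * c := by
      rw [← Nat.mul_add, Nat.sub_add_cancel (le_of_lt h3)]
    have h7 : n / c * c = c * (n / c) := by ring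
    omega
  have e1 := hbound (n / c + 1) (by omega)
  have e2 := hbound (n / c) (by omega)
  have hVn := TD.key S hc n
  have hlow : ((L - ε') ^ n : ℝ) ≤ (V (TD.dil S c) n : ℝ) := by
    rw [hVn]
    push_cast
    calc ((L - ε') ^ n : ℝ)
        = (L - ε') ^ ((n / c + 1) * (n % c)) * (L - ε') ^ ((n / c) * (c - n % c)) := by
          rw [← pow_add, hexp]
      _ = ((L - ε') ^ (n / c + 1)) ^ (n % c) * ((L - ε') ^ (n / c)) ^ (c - n % c) := by
          rw [← pow_mul, ← pow_mul]
      _ ≤ (V S (n / c + 1) : ℝ) ^ (n % c) * (V S (n / c) : ℝ) ^ (c - n % c) := by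
          apply mul_le_mul
          · exact pow_le_pow_left₀ (pow_nonneg (le_of_lt hbase) _) e1.1 _
          · exact pow_le_pow_left₀ (pow_nonneg (le_of_lt hbase) _) e2.1 _
          · exact pow_nonneg (pow_nonneg (le_of_lt hbase) _) _
          · exact pow_nonneg (Nat.cast_nonneg _) _
  have hhigh : (V (TD.dil S c) n : ℝ) ≤ ((L + ε') ^ n : ℝ) := by
    rw [hVn]
    push_cast
    calc (V S (n / c + 1) : ℝ) ^ (n % c) * (V S (n / c) : ℝ) ^ (c - n % c)
        ≤ ((L + ε') ^ (n / c + 1)) ^ (n % c) * ((L + ε') ^ (n / c)) ^ (c - n % c) := by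
          apply mul_le_mul
          · exact pow_le_pow_left₀ (Nat.cast_nonneg _) e1.2 _
          · exact pow_le_pow_left₀ (Nat.cast_nonneg _) e2.2 _
          · exact pow_nonneg (Nat.cast_nonneg _) _
          · exact pow_nonneg (pow_nonneg (by linarith) _) _
      _ = (L + ε') ^ n := by rw [← pow_mul, ← pow_mul, ← pow_add, hexp]
  have hinv : (0 : ℝ) ≤ 1 / (n : ℝ) := by positivity
  have hroot : ∀ x : ℝ, 0 < x → ((x ^ n : ℝ)) ^ (1 / (n : ℝ)) = x := by
    intro x hx
    rw [← Real.rpow_natCast x n, ← Real.rpow_mul (le_of_lt hx), mul_one_div,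
      div_self (ne_of_gt hnR), Real.rpow_one]
  have hlow' : L - ε' ≤ (V (TD.dil S c) n : ℝ) ^ (1 / (n : ℝ)) := by
    have := Real.rpow_le_rpow (pow_nonneg (le_of_lt hbase) n) hlow hinv
    rwa [hroot _ hbase] at this
  have hhigh' : (V (TD.dil S c) n : ℝ) ^ (1 / (n : ℝ)) ≤ L + ε' := by
    have := Real.rpow_le_rpow (Nat.cast_nonneg _) hhigh hinv
    rwa [hroot _ (by linarith)] at this
  rw [Real.dist_eq, abs_lt]
  constructor <;> [linarith; linarith]
end

section
/- For the scheme S = {(0,0)B, (1,4), (2,0)} over ℤ/7ℤ (an inverting ∧-canon), for every n ≥ 2 the number of valid n-note canons is exactly V_n(S) = 14, i.e., there are exactly two valid canons up to transposition; consequently λ(S) = 1. -/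
open Filter

def S0 : List Voice := [⟨0, 0, true⟩, ⟨1, 4, false⟩, ⟨2, 0, false⟩]

lemma step_mem (n : ℕ) (x : ℕ → ZMod 7) (h : ValidOn S0 n x) (k : ℕ) (hk : k + 1 < n) :
    x (k+1) - x k = 0 ∨ x (k+1) - x k = -1 := by
  have h1 := h ⟨1,4,false⟩ (by simp [S0]) ⟨0,0,true⟩ (by simp [S0]) k (k+1)
    (by omega) hk (by push_cast; ring)
  have h3 := h ⟨2,0,false⟩ (by simp [S0]) ⟨1,4,false⟩ (by simp [S0]) k (k+1)
    (by omega) hk (by push_cast; ring)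
  simp only [Set.mem_insert_iff, Set.mem_singleton_iff] at h1 h3
  revert h1 h3
  generalize x k = u
  generalize x (k+1) = v
  revert u v
  decide

lemma step_eq (n : ℕ) (x : ℕ → ZMod 7) (h : ValidOn S0 n x) :
    ∀ k, k + 1 < n → x (k+1) - x k = x 1 - x 0
  | 0, _ => rfl
  | (k+1), hk => by
    have ih := step_eq n x h k (by omega)
    have h1 := step_mem n x h k (by omega)
    have h2 := step_mem n x h (k+1) hk
    have h4 := h ⟨0,0,true⟩ (by simp [S0]) ⟨2,0,false⟩ (by simp [S0]) (k+1+1) k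
      (by omega) (by omega) (by push_cast; ring)
    replace h4 := h4.1
    simp only [Set.mem_insert_iff, Set.mem_singleton_iff] at h4
    rw [← ih]
    revert h1 h2 h4
    generalize x k = p
    generalize x (k+1) = q
    generalize x (k+1+1) = r
    revert p q r
    decide

lemma val_eq (n : ℕ) (x : ℕ → ZMod 7) (h : ValidOn S0 n x) :
    ∀ k, k < n → x k = x 0 + (k : ZMod 7) * (x 1 - x 0)
  | 0, _ => by simp
  | (k+1), hk => by
    have ih := val_eq n x h k (by omega)
    have hs := step_eq n x h k hk
    push_cast
    rw [show x (k+1) = x k + (x (k+1) - x k) by ring, hs, ih]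
    ring

def mel (n : ℕ) (c d : ZMod 7) (k : ℕ) : ZMod 7 :=
  if k < n then c + (k : ZMod 7) * d else 0

lemma mel_lt {n k : ℕ} (c d : ZMod 7) (h : k < n) : mel n c d k = c + (k : ZMod 7) * d :=
  if_pos h

lemma mel_valid (n : ℕ) (c d : ZMod 7) (hd : d = 0 ∨ d = -1) :
    ValidOn S0 n (mel n c d) := by
  intro vi hvi vj hvj a b ha hb hab
  fin_cases hvi <;> fin_cases hvj <;>
    dsimp only at hab ⊢ <;>
    simp only [Set.mem_insert_iff, Set.mem_singleton_iff, Bool.false_eq_true,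
      false_implies, and_true, true_implies]
  · -- (0,0): a = b
    obtain rfl : a = b := by omega
    rw [mel_lt c d ha]
    revert hd; generalize (a : ZMod 7) = u; revert c d u; decide
  · -- (0,1): a = b + 1
    obtain rfl : a = b + 1 := by omega
    rw [mel_lt c d ha, mel_lt c d hb]
    push_cast
    revert hd; generalize (b : ZMod 7) = u; revert c d u; decide
  · -- (0,2): a = b + 2
    obtain rfl : a = b + 2 := by omega
    rw [mel_lt c d ha, mel_lt c d hb]
    push_cast
    revert hd; generalize (b : ZMod 7) = u; revert c d u; decide
  · -- (1,0): b = a + 1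
    obtain rfl : b = a + 1 := by omega
    rw [mel_lt c d ha, mel_lt c d hb]
    push_cast
    revert hd; generalize (a : ZMod 7) = u; revert c d u; decide
  · -- (1,1): a = b
    obtain rfl : a = b := by omega
    rw [mel_lt c d ha]
    revert hd; generalize (a : ZMod 7) = u; revert c d u; decide
  · -- (1,2): a = b + 1
    obtain rfl : a = b + 1 := by omega
    rw [mel_lt c d ha, mel_lt c d hb]
    push_cast
    revert hd; generalize (b : ZMod 7) = u; revert c d u; decide
  · -- (2,0): b = a + 2
    obtain rfl : b = a + 2 := by omega
    rw [mel_lt c d ha, mel_lt c d hb]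
    push_cast
    revert hd; generalize (a : ZMod 7) = u; revert c d u; decide
  · -- (2,1): b = a + 1
    obtain rfl : b = a + 1 := by omega
    rw [mel_lt c d ha, mel_lt c d hb]
    push_cast
    revert hd; generalize (a : ZMod 7) = u; revert c d u; decide
  · -- (2,2): a = b
    obtain rfl : a = b := by omega
    rw [mel_lt c d ha]
    revert hd; generalize (a : ZMod 7) = u; revert c d u; decide

lemma V_eq (n : ℕ) (hn : 2 ≤ n) : V S0 n = 14 := by
  have e : {x : ℕ → ZMod 7 // ValidOn S0 n x ∧ ∀ k, n ≤ k → x k = 0} ≃ ZMod 7 × Bool :=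
  { toFun := fun x => (x.1 0, decide (x.1 1 - x.1 0 = -1))
    invFun := fun p => ⟨mel n p.1 (cond p.2 (-1) 0),
      mel_valid n p.1 _ (by cases p.2 <;> simp),
      fun k hk => by simp [mel, Nat.not_lt.mpr hk]⟩
    left_inv := by
      rintro ⟨x, hv, hz⟩
      apply Subtype.ext
      funext k
      dsimp only
      have hd01 : x 1 - x 0 = 0 ∨ x 1 - x 0 = -1 := step_mem n x hv 0 (by omega)
      have hcond : cond (decide (x 1 - x 0 = -1)) (-1 : ZMod 7) 0 = x 1 - x 0 := by
        rcases hd01 with h | h <;> rw [h] <;> decide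
      rw [hcond]
      by_cases hk : k < n
      · rw [mel_lt _ _ hk]
        exact (val_eq n x hv k hk).symm
      · simp only [mel, if_neg hk]
        exact (hz k (by omega)).symm
    right_inv := by
      rintro ⟨c, b⟩
      have h0 : mel n c (cond b (-1) 0) 0 = c := by
        rw [mel_lt _ _ (by omega : 0 < n)]; simp
      have h1 : mel n c (cond b (-1) 0) 1 = c + cond b (-1) 0 := by
        rw [mel_lt _ _ (by omega : 1 < n)]; simp
      simp only [h0, h1]
      cases b <;> simp
      all_goals decide }
  rw [V, Nat.card_congr e]
  simp [Nat.card_eq_fintype_card]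

/-- the inflexible scheme {(0,0)B,(1,4),(2,0)} admits exactly 14
valid canons of each length n ≥ 2, so its flexibility is 1. -/
theorem inflexible_scheme :
    (∀ n : ℕ, 2 ≤ n → V [⟨0, 0, true⟩, ⟨1, 4, false⟩, ⟨2, 0, false⟩] n = 14) ∧
    Tendsto (fun n : ℕ =>
      (V [⟨0, 0, true⟩, ⟨1, 4, false⟩, ⟨2, 0, false⟩] n : ℝ) ^ (1 / (n : ℝ)))
      atTop (nhds 1) := by
  constructor
  · exact fun n hn => V_eq n hn
  · have h14 : (fun n : ℕ => (14:ℝ) ^ (1/(n:ℝ))) =ᶠ[atTop]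
        (fun n : ℕ => (V [⟨0, 0, true⟩, ⟨1, 4, false⟩, ⟨2, 0, false⟩] n : ℝ) ^ (1/(n:ℝ))) := by
      filter_upwards [eventually_ge_atTop 2] with n hn
      rw [show V [⟨0, 0, true⟩, ⟨1, 4, false⟩, ⟨2, 0, false⟩] n = 14 from V_eq n hn]; norm_num
    have ht : Tendsto (fun n : ℕ => (14:ℝ) ^ (1/(n:ℝ))) atTop (nhds 1) := by
      have := (tendsto_const_nhds (x := (14:ℝ)) (f := atTop)).rpow
        tendsto_one_div_atTop_nhds_zero_nat (Or.inl (by norm_num))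
      simpa using this
    exact ht.congr' h14
end
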